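/- arXiv:2309.03197 — 5 statements merged into one kernel-verified Lean document; each statement's English description precedes it below -/
import Mathlib

section
/- If X is a symmetric integer-valued log-concave random variable on ℤ, then the random variable |X| is log-concave on ℕ; that is, if p denotes the probability mass function of X and q the probability mass function of |X|, then q(k)² ≥ q(k−1)q(k+1) for all k ≥ 1 and the support of q is an integer interval contained in ℕ. -/
open MeasureTheory ProbabilityTheory
open scoped ProbabilityTheory

/-- A function `p : ℤ → ℝ` is a log-concave probability mass function if
`p(k)² ≥ p(k-1)·p(k+1)` for all `k ∈ ℤ` and its support is an integer interval. -/
def IsLogConcavePMF (p : ℤ → ℝ) : Prop :=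
  (∀ k : ℤ, p (k - 1) * p (k + 1) ≤ p k ^ 2) ∧
  (∀ a b c : ℤ, a ≤ b → b ≤ c → 0 < p a → 0 < p c → 0 < p b)

/-- If `X` is a symmetric log-concave random variable on `ℤ`, then `|X|` is
log-concave on `ℕ`: its p.m.f. `q` satisfies `q(k)² ≥ q(k-1)·q(k+1)` for all `k ≥ 1`,
vanishes on negative integers, and has integer-interval support. -/
theorem abs_of_symmetric_logConcave
    {Ω : Type*} [MeasureSpace Ω] [IsProbabilityMeasure (ℙ : Measure Ω)]
    (X : Ω → ℤ) (hX : Measurable X)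
    (p q : ℤ → ℝ)
    (hp : ∀ k : ℤ, p k = (ℙ (X ⁻¹' {k})).toReal)
    (hq : ∀ k : ℤ, q k = (ℙ ((fun ω => |X ω|) ⁻¹' {k})).toReal)
    (hsym : ∀ k : ℤ, p k = p (-k))
    (hlc : IsLogConcavePMF p) :
    (∀ k : ℤ, 1 ≤ k → q (k - 1) * q (k + 1) ≤ q k ^ 2) ∧
    (∀ k : ℤ, k < 0 → q k = 0) ∧
    (∀ a b c : ℤ, a ≤ b → b ≤ c → 0 < q a → 0 < q c → 0 < q b) := by
  obtain ⟨hlc1, hlc2⟩ := hlc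
  have hpnn : ∀ k : ℤ, 0 ≤ p k := fun k => (hp k) ▸ ENNReal.toReal_nonneg
  -- q at positive k
  have hqpos : ∀ k : ℤ, 1 ≤ k → q k = 2 * p k := by
    intro k hk
    have hset : (fun ω => |X ω|) ⁻¹' {k} = X ⁻¹' {k} ∪ X ⁻¹' {-k} := by
      ext ω
      simp [abs_eq (by linarith : (0:ℤ) ≤ k)]
    have hdisj : Disjoint (X ⁻¹' {k}) (X ⁻¹' {-k}) := by
      rw [Set.disjoint_left]
      intro ω h1 h2
      simp only [Set.mem_preimage, Set.mem_singleton_iff] at h1 h2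
      omega
    rw [hq, hset, measure_union hdisj (hX (measurableSet_singleton _)),
      ENNReal.toReal_add (measure_ne_top _ _) (measure_ne_top _ _),
      ← hp, ← hp, ← hsym]
    ring
  have hq0 : q 0 = p 0 := by
    rw [hq, hp]
    congr 1
    congr 1
    ext ω
    simp [abs_eq_zero]
  have hqneg : ∀ k : ℤ, k < 0 → q k = 0 := by
    intro k hk
    rw [hq]
    have : (fun ω => |X ω|) ⁻¹' {k} = ∅ := by
      ext ω
      simp only [Set.mem_preimage, Set.mem_singleton_iff, Set.mem_empty_iff_false,
        iff_false]
      intro h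
      have := abs_nonneg (X ω)
      omega
    simp [this]
  refine ⟨?_, hqneg, ?_⟩
  · intro k hk
    rcases eq_or_lt_of_le hk with h1 | h2
    · -- k = 1
      rw [← h1]
      norm_num
      rw [hq0, hqpos 2 (by norm_num), hqpos 1 le_rfl]
      have h := hlc1 1
      norm_num at h
      nlinarith [hpnn 0, hpnn 1, hpnn 2, sq_nonneg (p 1)]
    · -- k ≥ 2
      rw [hqpos (k - 1) (by omega), hqpos (k + 1) (by omega), hqpos k (by omega)]
      have h := hlc1 k
      nlinarith [hpnn (k-1), hpnn (k+1)]
  · intro a b c hab hbc ha hc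
    have ha0 : 0 ≤ a := by
      by_contra h
      rw [hqneg a (by omega)] at ha
      exact lt_irrefl _ ha
    have hpa : 0 < p a := by
      rcases eq_or_lt_of_le ha0 with h | h
      · rw [← h] at ha ⊢; rwa [hq0] at ha
      · have := hqpos a (by omega)
        rw [this] at ha; linarith
    have hpc : 0 < p c := by
      rcases eq_or_lt_of_le (le_trans ha0 (le_trans hab hbc)) with h | h
      · rw [← h] at hc ⊢
        rwa [← hq0]
      · have := hqpos c (by omega)
        rw [this] at hc; linarith
    have hpb : 0 < p b := hlc2 a b c hab hbc hpa hpc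
    rcases eq_or_lt_of_le (le_trans ha0 hab) with h | h
    · rw [← h, hq0]; rwa [← h] at hpb
    · rw [hqpos b (by omega)]; linarith
end

section
/- Let X be the integer-valued random variable supported on {−1, 0, 1, 2, 3} with P(X = −1) = P(X = 3) = 0.1, P(X = 0) = P(X = 2) = 0.2, and P(X = 1) = 0.4. Then X is log-concave on ℤ, but |X| is not log-concave on ℕ; indeed P(|X| = 2)² < P(|X| = 1) · P(|X| = 3). -/
open MeasureTheory ProbabilityTheory
open scoped ProbabilityTheory

/-- The random variable supported on `{-1,0,1,2,3}` with `P(X=-1)=P(X=3)=0.1`,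
`P(X=0)=P(X=2)=0.2`, `P(X=1)=0.4` is log-concave on `ℤ`, but `|X|` is not
log-concave on `ℕ`; indeed `P(|X|=2)² < P(|X|=1)·P(|X|=3)`. -/
theorem counterexample_abs_not_logConcave
    {Ω : Type*} [MeasureSpace Ω] [IsProbabilityMeasure (ℙ : Measure Ω)]
    (X : Ω → ℤ) (hX : Measurable X)
    (p q : ℤ → ℝ)
    (hp : ∀ k : ℤ, p k = (ℙ (X ⁻¹' {k})).toReal)
    (hq : ∀ k : ℤ, q k = (ℙ ((fun ω => |X ω|) ⁻¹' {k})).toReal)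
    (hm1 : p (-1) = 0.1) (h3 : p 3 = 0.1)
    (h0 : p 0 = 0.2) (h2 : p 2 = 0.2) (h1 : p 1 = 0.4)
    (hrest : ∀ k : ℤ, k ∉ ({-1, 0, 1, 2, 3} : Set ℤ) → p k = 0) :
    IsLogConcavePMF p ∧
    ¬ ((∀ k : ℤ, 1 ≤ k → q (k - 1) * q (k + 1) ≤ q k ^ 2) ∧
       (∀ a b c : ℤ, a ≤ b → b ≤ c → 0 < q a → 0 < q c → 0 < q b)) ∧
    q 2 ^ 2 < q 1 * q 3 := by
  have hzero : ∀ k : ℤ, k < -1 ∨ 3 < k → p k = 0 := by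
    intro k hk
    apply hrest
    simp only [Set.mem_insert_iff, Set.mem_singleton_iff]
    omega
  have hnn : ∀ k : ℤ, 0 ≤ p k := fun k => (hp k) ▸ ENNReal.toReal_nonneg
  have key : ∀ k : ℤ, 0 < k → q k = p (-k) + p k := by
    intro k hk
    have hset : (fun ω => |X ω|) ⁻¹' {k} = X ⁻¹' {-k} ∪ X ⁻¹' {k} := by
      ext ω
      simp only [Set.mem_preimage, Set.mem_singleton_iff, Set.mem_union]
      rw [abs_eq hk.le]
      tauto
    rw [hq, hset, measure_union ?_ (hX (measurableSet_singleton k)),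
      ENNReal.toReal_add (measure_ne_top _ _) (measure_ne_top _ _), hp, hp]
    exact Disjoint.preimage X (by simp [Set.disjoint_singleton]; omega)
  have hq1 : q 1 = 0.5 := by rw [key 1 one_pos, hm1, h1]; norm_num
  have hq2 : q 2 = 0.2 := by
    rw [key 2 two_pos, hzero (-2) (by omega), h2]; norm_num
  have hq3 : q 3 = 0.1 := by
    rw [key 3 three_pos, hzero (-3) (by omega), h3]; norm_num
  refine ⟨⟨?_, ?_⟩, ?_, ?_⟩
  · intro k
    rcases lt_trichotomy k (-1) with hk | hk | hk
    · rw [hzero (k - 1) (by omega)]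
      simpa using sq_nonneg (p k)
    · subst hk
      rw [show (-1 : ℤ) - 1 = -2 by norm_num, hzero (-2) (by omega)]
      simpa using sq_nonneg (p (-1))
    · rcases le_or_gt k 3 with hk3 | hk3
      · interval_cases k
        · norm_num [hm1, h0, h1]
        · norm_num [h0, h1, h2]
        · norm_num [h1, h2, h3]
        · rw [show (3 : ℤ) + 1 = 4 by norm_num, hzero 4 (by omega)]
          simpa using sq_nonneg (p 3)
      · rw [hzero (k + 1) (by omega)]
        simpa using sq_nonneg (p k)
  · intro a b c hab hbc ha hc
    have ha' : ¬ (a < -1 ∨ 3 < a) := fun h => by rw [hzero a h] at ha; exact lt_irrefl _ ha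
    have hc' : ¬ (c < -1 ∨ 3 < c) := fun h => by rw [hzero c h] at hc; exact lt_irrefl _ hc
    have hb1 : -1 ≤ b := by omega
    have hb2 : b ≤ 3 := by omega
    interval_cases b <;> simp [hm1, h0, h1, h2, h3] <;> norm_num
  · rintro ⟨h, -⟩
    have := h 2 (by norm_num)
    rw [show (2 : ℤ) - 1 = 1 by norm_num, show (2 : ℤ) + 1 = 3 by norm_num,
      hq1, hq2, hq3] at this
    norm_num at this
  · rw [hq1, hq2, hq3]; norm_num
end

section
/- If X is a symmetric log-concave integer-valued random variable, then for all real β ≥ 1, E[|X|^β]^{1/β} ≤ Γ(β+1)^{1/β} · (E[|X|] + 1), where Γ denotes the Gamma function. -/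
open MeasureTheory ProbabilityTheory
open scoped ProbabilityTheory

namespace SMB

open MeasureTheory Finset Set
open scoped ENNReal NNReal

lemma summable_of_ofReal_ne_top {f : ℕ → ℝ} (hf : ∀ n, 0 ≤ f n)
    (h : (∑' n, ENNReal.ofReal (f n)) ≠ ⊤) : Summable f := by
  have h2 : (∑' n, ((f n).toNNReal : ℝ≥0∞)) ≠ ⊤ := by
    simpa [ENNReal.ofReal] using h
  have h3 := ENNReal.tsum_coe_ne_top_iff_summable.mp h2
  have h4 : Summable (fun n => ((f n).toNNReal : ℝ)) := NNReal.summable_coe.mpr h3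
  exact h4.congr (fun n => Real.coe_toNNReal _ (hf n))

lemma swE (g h : ℕ → ℝ≥0∞) :
    (∑' n, (∑ j ∈ Finset.range n, g j) * h n) = ∑' k, g k * ∑' n, h (n + (k+1)) := by
  have key : ∀ n, (∑ j ∈ Finset.range n, g j) * h n
      = ∑' k, (if k < n then g k * h n else 0) := by
    intro n
    rw [Finset.sum_mul, tsum_eq_sum (s := Finset.range n)
      (by intro k hk; simp [Finset.mem_range.not.mp hk] )]
    exact (Finset.sum_congr rfl fun k hk => by simp [Finset.mem_range.mp hk]).symm
  calc (∑' n, (∑ j ∈ Finset.range n, g j) * h n)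
      = ∑' n, ∑' k, (if k < n then g k * h n else 0) := tsum_congr key
    _ = ∑' k, ∑' n, (if k < n then g k * h n else 0) := ENNReal.tsum_comm
    _ = ∑' k, g k * ∑' n, h (n + (k+1)) := by
        refine tsum_congr fun k => ?_
        rw [← Summable.sum_add_tsum_nat_add' (k := k+1) ENNReal.summable]
        have h1 : (∑ i ∈ Finset.range (k+1), if k < i then g k * h i else 0) = 0 := by
          apply Finset.sum_eq_zero
          intro i hi
          simp [Nat.not_lt.mpr (Nat.lt_succ_iff.mp (Finset.mem_range.mp hi))]
        have h2 : (∑' i : ℕ, if k < i + (k+1) then g k * h (i + (k+1)) else 0)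
            = ∑' i : ℕ, g k * h (i + (k+1)) := by
          refine tsum_congr fun i => ?_
          rw [if_pos (by omega)]
        rw [h1, h2, zero_add, ENNReal.tsum_mul_left]

lemma swR (g h : ℕ → ℝ) (hg : ∀ j, 0 ≤ g j) (hh : ∀ n, 0 ≤ h n)
    (hh' : Summable h)
    (hsum : Summable (fun n => (∑ j ∈ Finset.range n, g j) * h n)) :
    Summable (fun k => g k * ∑' n, h (n + (k+1))) ∧
    (∑' n, (∑ j ∈ Finset.range n, g j) * h n) = ∑' k, g k * ∑' n, h (n + (k+1)) := by
  have htail : ∀ k, Summable fun n => h (n + (k+1)) :=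
    fun k => (summable_nat_add_iff _).mpr hh'
  have hLnn : ∀ n, 0 ≤ (∑ j ∈ Finset.range n, g j) * h n :=
    fun n => mul_nonneg (Finset.sum_nonneg fun j _ => hg j) (hh n)
  have hRnn : ∀ k, 0 ≤ g k * ∑' n, h (n + (k+1)) :=
    fun k => mul_nonneg (hg k) (tsum_nonneg fun n => hh _)
  have hchain : ENNReal.ofReal (∑' n, (∑ j ∈ Finset.range n, g j) * h n)
      = ∑' k, ENNReal.ofReal (g k * ∑' n, h (n + (k+1))) := by
    rw [ENNReal.ofReal_tsum_of_nonneg hLnn hsum]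
    have e1 : ∀ n, ENNReal.ofReal ((∑ j ∈ Finset.range n, g j) * h n)
        = (∑ j ∈ Finset.range n, ENNReal.ofReal (g j)) * ENNReal.ofReal (h n) := by
      intro n
      rw [ENNReal.ofReal_mul (Finset.sum_nonneg fun j _ => hg j),
        ENNReal.ofReal_sum_of_nonneg (fun j _ => hg j)]
    rw [tsum_congr e1, swE]
    refine tsum_congr fun k => ?_
    rw [← ENNReal.ofReal_tsum_of_nonneg (fun n => hh _) (htail k),
      ← ENNReal.ofReal_mul (hg k)]
  have hfin : (∑' k, ENNReal.ofReal (g k * ∑' n, h (n + (k+1)))) ≠ ⊤ := by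
    rw [← hchain]; exact ENNReal.ofReal_ne_top
  have hS : Summable (fun k => g k * ∑' n, h (n + (k+1))) :=
    summable_of_ofReal_ne_top hRnn hfin
  refine ⟨hS, ?_⟩
  have := hchain.trans (ENNReal.ofReal_tsum_of_nonneg hRnn hS).symm
  exact (ENNReal.ofReal_eq_ofReal_iff (tsum_nonneg hLnn) (tsum_nonneg hRnn)).mp this


lemma ratio_mono {Q : ℕ → ℝ} (hnn : ∀ n, 0 ≤ Q n) (hmono : ∀ n, Q (n+1) ≤ Q n)
    (hLC : ∀ n, Q (n+2) * Q n ≤ Q (n+1)^2) :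
    ∀ k j, k ≤ j → Q (j+1) * Q k ≤ Q j * Q (k+1) := by
  intro k j hkj
  induction j, hkj using Nat.le_induction with
  | base => rw [mul_comm]
  | succ j hkj IH =>
    rcases eq_or_lt_of_le (hnn (j+1)) with hz | hpos
    · have h2 : Q (j+2) = 0 := le_antisymm (by rw [hz]; exact hmono (j+1)) (hnn _)
      rw [h2, zero_mul]
      exact mul_nonneg (hnn _) (hnn _)
    · have h5 : Q (j+2) * Q k * Q (j+1) ≤ Q (j+1) * Q (k+1) * Q (j+1) := by
        calc Q (j+2) * Q k * Q (j+1) = Q (j+2) * (Q (j+1) * Q k) := by ring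
          _ ≤ Q (j+2) * (Q j * Q (k+1)) := mul_le_mul_of_nonneg_left IH (hnn _)
          _ = (Q (j+2) * Q j) * Q (k+1) := by ring
          _ ≤ Q (j+1)^2 * Q (k+1) := mul_le_mul_of_nonneg_right (hLC j) (hnn _)
          _ = Q (j+1) * Q (k+1) * Q (j+1) := by ring
      exact le_of_mul_le_mul_right h5 hpos

lemma lemA {Q : ℕ → ℝ} {M q : ℝ} (hnn : ∀ n, 0 ≤ Q n) (hQ0 : Q 0 = 1)
    (hmono : ∀ n, Q (n+1) ≤ Q n) (hLC : ∀ n, Q (n+2) * Q n ≤ Q (n+1)^2)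
    (hsum : Summable Q) (hM : M = ∑' n, Q (n+1)) (hq : q = M / (M+1)) :
    ∀ k, (∑' n, Q (n + (k+1))) ≤ (M+1) * q^(k+1) := by
  have hsum1 : Summable (fun n => Q (n+1)) := (summable_nat_add_iff 1).mpr hsum
  have hMnn : 0 ≤ M := hM ▸ tsum_nonneg (fun n => hnn _)
  have hM1 : (0:ℝ) < M + 1 := by linarith
  rcases eq_or_lt_of_le hMnn with hM0 | hMpos
  · -- M = 0
    intro k
    have hz : ∀ n, Q (n+1) = 0 := by
      intro n
      have h1 : Q (n+1) ≤ ∑' n, Q (n+1) := Summable.le_tsum hsum1 n (fun m _ => hnn _)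
      have h2 := hM ▸ h1
      linarith [hnn (n+1), h2, hM0]
    have hzt : (∑' n, Q (n + (k+1))) = 0 := by
      have hfun : ∀ n : ℕ, Q (n + (k+1)) = 0 := fun n => hz (n+k)
      rw [tsum_congr hfun, tsum_zero]
    rw [hzt, hq, ← hM0]
    simp
  · have hq0 : 0 < q := hq ▸ div_pos hMpos hM1
    have hq1 : q < 1 := hq ▸ (div_lt_one hM1).mpr (by linarith)
    have hgeo : Summable (fun n : ℕ => q^n) := summable_geometric_of_lt_one hq0.le hq1
    have hinv : (1 - q)⁻¹ = M + 1 := by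
      rw [hq, show (1 : ℝ) - M / (M+1) = 1/(M+1) by field_simp; ring]
      simp
    have hgeosum : ∀ j : ℕ, (∑' n, q^(n + j)) = (M+1) * q^j := by
      intro j
      calc (∑' n, q^(n+j)) = ∑' n, q^n * q^j := by
            refine tsum_congr fun n => ?_; rw [pow_add]
        _ = (∑' n, q^n) * q^j := tsum_mul_right
        _ = (M+1) * q^j := by rw [tsum_geometric_of_lt_one hq0.le hq1, hinv]
    have hgeoM : (∑' n, q^(n+1)) = M := by
      rw [hgeosum 1, hq]; field_simp
    intro k
    by_cases hall : ∀ i, i < k → q^(i+1) ≤ Q (i+1)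
    · -- partial sum argument
      have e1' : (∑ i ∈ range k, Q (i+1)) + (∑' n, Q (n + (k+1))) = M := by
        have h := Summable.sum_add_tsum_nat_add (f := fun n => Q (n+1)) k hsum1
        rw [← hM] at h
        simpa [add_assoc] using h
      have e2' : (∑ i ∈ range k, q^(i+1)) + (M+1) * q^(k+1) = M := by
        have h := Summable.sum_add_tsum_nat_add (f := fun n => q^(n+1)) k
          ((summable_nat_add_iff 1).mpr hgeo)
        rw [hgeoM] at h
        have h2 : (∑' i:ℕ, q^(i+k+1)) = (M+1)*q^(k+1) := by
          rw [← hgeosum (k+1)]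
          exact tsum_congr fun n => by ring_nf
        rw [← h2]
        simpa using h
      have hle : (∑ i ∈ range k, q^(i+1)) ≤ ∑ i ∈ range k, Q (i+1) :=
        Finset.sum_le_sum fun i hi => hall i (Finset.mem_range.mp hi)
      linarith
    · -- termwise argument
      push_neg at hall
      obtain ⟨i0, hi0k, hi0⟩ := hall
      have hex : ∃ m, Q m < q^m := ⟨i0+1, hi0⟩
      set n0 := Nat.find hex with hn0def
      have hn0 : Q n0 < q^n0 := Nat.find_spec hex
      have hmin : ∀ m, m < n0 → q^m ≤ Q m := fun m hm => le_of_not_gt (Nat.find_min hex hm)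
      have hn0i0 : n0 ≤ i0 + 1 := Nat.find_min' hex hi0
      have hn0pos : n0 ≠ 0 := by
        intro h0
        rw [h0, hQ0, pow_zero] at hn0; exact lt_irrefl 1 hn0
      obtain ⟨m0, hm0⟩ : ∃ m0, n0 = m0 + 1 := ⟨n0 - 1, by omega⟩
      have hQm0 : q^m0 ≤ Q m0 := hmin m0 (by omega)
      have hup : ∀ i, Q (n0 + i) ≤ q^(n0 + i) := by
        intro i
        induction i with
        | zero => simpa using hn0.le
        | succ i IH =>
          have hrm : Q ((n0+i) + 1) * Q m0 ≤ Q (n0 + i) * Q (m0 + 1) :=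
            ratio_mono hnn hmono hLC m0 (n0 + i) (by omega)
          rw [← hm0] at hrm
          have hr1 : Q (n0 + i) * Q n0 ≤ q^(n0+i) * q^n0 :=
            mul_le_mul IH hn0.le (hnn _) (by positivity)
          have hr2 : Q ((n0 + i) + 1) * q^m0 ≤ Q ((n0 + i)+1) * Q m0 :=
            mul_le_mul_of_nonneg_left hQm0 (hnn _)
          have hr4 : q^(n0+i) * q^n0 = q^((n0 + i) + 1) * q^m0 := by
            rw [hm0]; ring
          have h5 : Q ((n0 + i) + 1) * q^m0 ≤ q^((n0 + i) + 1) * q^m0 := by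
            calc Q ((n0+i)+1) * q^m0 ≤ Q ((n0+i)+1) * Q m0 := hr2
              _ ≤ Q (n0+i) * Q n0 := hrm
              _ ≤ q^(n0+i) * q^n0 := hr1
              _ = q^((n0+i)+1) * q^m0 := hr4
          exact le_of_mul_le_mul_right h5 (by positivity : (0:ℝ) < q^m0)
      have hterm : ∀ n, Q (n + (k+1)) ≤ q^(n + (k+1)) := by
        intro n
        have hn0le : n0 ≤ n + (k+1) := by omega
        have h := hup (n + (k+1) - n0)
        have heq : n0 + (n + (k+1) - n0) = n + (k+1) := by omega
        rwa [heq] at h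
      calc (∑' n, Q (n + (k+1))) ≤ ∑' n, q^(n + (k+1)) :=
            Summable.tsum_le_tsum hterm ((summable_nat_add_iff (k+1)).mpr hsum)
              ((summable_nat_add_iff (k+1)).mpr hgeo)
        _ = (M+1) * q^(k+1) := hgeosum (k+1)


lemma analytic {β q : ℝ} (hβ : 1 ≤ β) (hq0 : 0 ≤ q) (hq1 : q < 1) :
    (1-q) * ∑' n : ℕ, (n:ℝ)^β * q^n ≤ Real.Gamma (β+1) * (1/(1-q))^β := by
  have hβ0 : (0:ℝ) < β := by linarith
  have hΓ : 0 < Real.Gamma (β+1) := Real.Gamma_pos_of_pos (by linarith)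
  have h1q : (0:ℝ) < 1 - q := by linarith
  rcases eq_or_lt_of_le hq0 with hq0' | hqpos
  · -- q = 0
    have hz : ∀ n : ℕ, (n:ℝ)^β * q^n = 0 := by
      intro n
      rcases Nat.eq_zero_or_pos n with h0 | hp
      · subst h0; simp [Real.zero_rpow hβ0.ne']
      · rw [← hq0', zero_pow (by omega), mul_zero]
    rw [tsum_congr hz, tsum_zero, mul_zero]
    positivity
  -- q > 0
  set c : ℝ := -Real.log q with hc_def
  have hc : 0 < c := by
    have := Real.log_neg hqpos hq1
    simp only [hc_def]; linarith
  have hqe : Real.exp (-c) = q := by rw [hc_def, neg_neg, Real.exp_log hqpos]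
  have hec : Real.exp c = q⁻¹ := by
    rw [show c = -(-c) by ring, Real.exp_neg, hqe]
  have hqk : ∀ k : ℕ, Real.exp (-(c*(k:ℝ))) = q^k := by
    intro k
    rw [show -(c*(k:ℝ)) = (k:ℝ) * (-c) by ring, Real.exp_nat_mul, hqe]
  have h1qc : 1 - q ≤ c := by
    have := Real.log_le_sub_one_of_pos hqpos
    simp only [hc_def]; linarith
  -- the integrand on Ioi 0
  set F : ℝ → ℝ := fun u => u^β * Real.exp (-(c*u)) with hF_def
  have hFIoi : MeasureTheory.IntegrableOn F (Ioi 0) := by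
    have h := integrableOn_rpow_mul_exp_neg_mul_rpow (s := β) (p := 1) (b := c)
      (by linarith) zero_lt_one hc
    refine h.congr_fun (fun x hx => ?_) measurableSet_Ioi
    beta_reduce; rw [Real.rpow_one]; ring_nf; rfl
  have hFval : ∫ u in Ioi (0:ℝ), F u = (1/c)^(β+1) * Real.Gamma (β+1) := by
    have h := Real.integral_rpow_mul_exp_neg_mul_Ioi (a := β+1) (r := c) (by linarith) hc
    rw [show β + 1 - 1 = β by ring] at h
    exact h
  have hFnn : ∀ u : ℝ, 0 < u → 0 ≤ F u := by
    intro u hu; have : (0:ℝ) ≤ u^β := Real.rpow_nonneg hu.le β; positivity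
  -- continuity of the shifted integrand
  have hGcont : Continuous (fun s : ℝ => (s+1)^β * Real.exp (-(c*s))) := by
    have h1 : Continuous (fun s : ℝ => (s+1)^β) :=
      (continuous_id.add continuous_const).rpow_const (fun x => Or.inr hβ0.le)
    exact h1.mul (Real.continuous_exp.comp ((continuous_const.mul continuous_id).neg))
  have hGint : ∀ a b : ℝ, IntervalIntegrable (fun s : ℝ => (s+1)^β * Real.exp (-(c*s)))
      MeasureTheory.volume a b := fun a b => hGcont.intervalIntegrable a b
  -- key pointwise integral bound
  have hkey : ∀ k : ℕ, ((k:ℝ)+1)^β * q^(k+1)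
      ≤ (q*c/(1-q)) * ∫ s in (k:ℝ)..((k:ℝ)+1), (s+1)^β * Real.exp (-(c*s)) := by
    intro k
    have hIexp : (∫ s in (k:ℝ)..((k:ℝ)+1), Real.exp (-(c*s))) = (q^k - q^(k+1))/c := by
      have he : (fun s : ℝ => Real.exp (-(c*s))) = fun s : ℝ => Real.exp ((-c)*s) := by
        funext s; ring_nf
      rw [he, intervalIntegral.integral_comp_mul_left (fun u => Real.exp u)
        (by linarith : -c ≠ 0), integral_exp]
      have ea : Real.exp (-c * ((k:ℝ)+1)) = q^(k+1) := by
        rw [show -c * ((k:ℝ)+1) = -(c*((k+1:ℕ):ℝ)) by push_cast; ring, hqk]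
      have eb : Real.exp (-c * (k:ℝ)) = q^k := by
        rw [show -c * (k:ℝ) = -(c*(k:ℝ)) by ring, hqk]
      rw [ea, eb, smul_eq_mul]
      field_simp
      ring
    have hlow : (∫ s in (k:ℝ)..((k:ℝ)+1), ((k:ℝ)+1)^β * Real.exp (-(c*s)))
        ≤ ∫ s in (k:ℝ)..((k:ℝ)+1), (s+1)^β * Real.exp (-(c*s)) := by
      apply intervalIntegral.integral_mono_on (by linarith)
        ((Continuous.mul continuous_const
          (Real.continuous_exp.comp ((continuous_const.mul continuous_id).neg))).intervalIntegrable _ _)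
        (hGint _ _)
      intro s hs
      have hs1 : (k:ℝ) ≤ s := hs.1
      have hb : ((k:ℝ)+1)^β ≤ (s+1)^β :=
        Real.rpow_le_rpow (by positivity) (by linarith) hβ0.le
      exact mul_le_mul_of_nonneg_right hb (Real.exp_nonneg _)
    have hlowval : (∫ s in (k:ℝ)..((k:ℝ)+1), ((k:ℝ)+1)^β * Real.exp (-(c*s)))
        = ((k:ℝ)+1)^β * ((q^k - q^(k+1))/c) := by
      rw [intervalIntegral.integral_const_mul, hIexp]
    have heq : ((k:ℝ)+1)^β * q^(k+1) = (q*c/(1-q)) * (((k:ℝ)+1)^β * ((q^k - q^(k+1))/c)) := by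
      field_simp
      ring
    rw [heq]
    apply mul_le_mul_of_nonneg_left _ (by positivity)
    rw [← hlowval]; exact hlow
  -- partial sums bound
  set B : ℝ := Real.Gamma (β+1) * (1/(1-q))^β / (1-q) with hB_def
  have hpartial : ∀ K : ℕ, (∑ n ∈ Finset.range K, (n:ℝ)^β * q^n) ≤ B := by
    intro K
    have hstep1 : (∑ n ∈ Finset.range K, (n:ℝ)^β * q^n)
        ≤ ∑ n ∈ Finset.range (K+1), (n:ℝ)^β * q^n := by
      apply Finset.sum_le_sum_of_subset_of_nonneg (Finset.range_subset_range.mpr (by omega))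
      intro n _ _
      positivity
    have hstep2 : (∑ n ∈ Finset.range (K+1), (n:ℝ)^β * q^n)
        = ∑ i ∈ Finset.range K, ((i:ℝ)+1)^β * q^(i+1) := by
      rw [Finset.sum_range_succ']
      have h00 : ((0:ℕ):ℝ)^β * q^0 = 0 := by simp [Real.zero_rpow hβ0.ne']
      rw [h00, add_zero]
      exact Finset.sum_congr rfl fun i _ => by push_cast; ring_nf
    have hstep3 : (∑ i ∈ Finset.range K, ((i:ℝ)+1)^β * q^(i+1))
        ≤ (q*c/(1-q)) * ∫ s in (0:ℝ)..(K:ℝ), (s+1)^β * Real.exp (-(c*s)) := by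
      have hsum' : (∑ i ∈ Finset.range K, ∫ s in (i:ℝ)..((i:ℝ)+1), (s+1)^β * Real.exp (-(c*s)))
          = ∫ s in (0:ℝ)..(K:ℝ), (s+1)^β * Real.exp (-(c*s)) := by
        have hsum := intervalIntegral.sum_integral_adjacent_intervals
          (a := fun k : ℕ => (k:ℝ)) (n := K)
          (f := fun s : ℝ => (s+1)^β * Real.exp (-(c*s)))
          (μ := MeasureTheory.volume) (fun k _ => hGint _ _)
        push_cast at hsum
        simpa using hsum
      calc (∑ i ∈ Finset.range K, ((i:ℝ)+1)^β * q^(i+1))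
          ≤ ∑ i ∈ Finset.range K, (q*c/(1-q)) *
              ∫ s in (i:ℝ)..((i:ℝ)+1), (s+1)^β * Real.exp (-(c*s)) :=
            Finset.sum_le_sum fun i _ => hkey i
        _ = (q*c/(1-q)) * ∑ i ∈ Finset.range K,
              ∫ s in (i:ℝ)..((i:ℝ)+1), (s+1)^β * Real.exp (-(c*s)) := by
            rw [Finset.mul_sum]
        _ = (q*c/(1-q)) * ∫ s in (0:ℝ)..(K:ℝ), (s+1)^β * Real.exp (-(c*s)) := by
            rw [← hsum']
    have hstep4 : (∫ s in (0:ℝ)..(K:ℝ), (s+1)^β * Real.exp (-(c*s)))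
        ≤ Real.exp c * ((1/c)^(β+1) * Real.Gamma (β+1)) := by
      have hgf : ∀ s : ℝ, (s+1)^β * Real.exp (-(c*s)) = Real.exp c * F (s+1) := by
        intro s
        rw [hF_def]
        simp only
        rw [← mul_assoc, mul_comm (Real.exp c), mul_assoc, ← Real.exp_add]
        congr 2
        ring
      have e1 : (∫ s in (0:ℝ)..(K:ℝ), (s+1)^β * Real.exp (-(c*s)))
          = Real.exp c * ∫ s in (0:ℝ)..(K:ℝ), F (s+1) := by
        rw [← intervalIntegral.integral_const_mul]
        exact intervalIntegral.integral_congr fun s _ => hgf s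
      have e2 : (∫ s in (0:ℝ)..(K:ℝ), F (s+1)) = ∫ u in (1:ℝ)..((K:ℝ)+1), F u := by
        simpa using intervalIntegral.integral_comp_add_right (a := (0:ℝ)) (b := (K:ℝ)) F 1
      have e3 : (∫ u in (1:ℝ)..((K:ℝ)+1), F u) ≤ ∫ u in Ioi (0:ℝ), F u := by
        rw [intervalIntegral.integral_of_le (by push_cast; linarith [Nat.cast_nonneg (α := ℝ) K])]
        apply MeasureTheory.setIntegral_mono_set hFIoi
        · filter_upwards [MeasureTheory.ae_restrict_mem measurableSet_Ioi] with u hu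
          exact hFnn u hu
        · exact HasSubset.Subset.eventuallyLE (fun u hu => lt_trans zero_lt_one hu.1)
      rw [e1, e2]
      rw [← hFval]
      exact mul_le_mul_of_nonneg_left e3 (Real.exp_nonneg _)
    have hfinal : (q*c/(1-q)) * (Real.exp c * ((1/c)^(β+1) * Real.Gamma (β+1))) ≤ B := by
      rw [hB_def]
      have hqec : q * Real.exp c = 1 := by rw [hec]; field_simp
      have hc1 : (1/c)^(β+1) = (1/c)^β * (1/c) := by
        rw [Real.rpow_add (show (0:ℝ) < 1/c by positivity), Real.rpow_one]
      have hv : (q*c/(1-q)) * (Real.exp c * ((1/c)^(β+1) * Real.Gamma (β+1)))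
          = (q * Real.exp c) * ((1/c)^β * Real.Gamma (β+1) / (1-q)) := by
        rw [hc1]; field_simp
      rw [hv, hqec, one_mul]
      have hcb : (1/c)^β ≤ (1/(1-q))^β :=
        Real.rpow_le_rpow (by positivity) (by
          apply one_div_le_one_div_of_le h1q h1qc) hβ0.le
      have hnum : (1/c)^β * Real.Gamma (β+1) ≤ Real.Gamma (β+1) * (1/(1-q))^β := by
        rw [mul_comm]
        exact mul_le_mul_of_nonneg_left hcb hΓ.le
      rw [div_eq_mul_inv, div_eq_mul_inv]
      exact mul_le_mul_of_nonneg_right hnum (inv_nonneg.mpr h1q.le)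
    calc (∑ n ∈ Finset.range K, (n:ℝ)^β * q^n)
        ≤ ∑ i ∈ Finset.range K, ((i:ℝ)+1)^β * q^(i+1) := by rw [← hstep2]; exact hstep1
      _ ≤ (q*c/(1-q)) * ∫ s in (0:ℝ)..(K:ℝ), (s+1)^β * Real.exp (-(c*s)) := hstep3
      _ ≤ (q*c/(1-q)) * (Real.exp c * ((1/c)^(β+1) * Real.Gamma (β+1))) :=
          mul_le_mul_of_nonneg_left hstep4 (by positivity)
      _ ≤ B := hfinal
  have htsum : (∑' n : ℕ, (n:ℝ)^β * q^n) ≤ B :=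
    Real.tsum_le_of_sum_range_le (fun n => by positivity) hpartial
  calc (1-q) * ∑' n : ℕ, (n:ℝ)^β * q^n ≤ (1-q) * B :=
        mul_le_mul_of_nonneg_left htsum h1q.le
    _ = Real.Gamma (β+1) * (1/(1-q))^β := by
        rw [hB_def]; field_simp
lemma summable_rpow_geom {β q : ℝ} (hβ0 : 0 < β) (hq0 : 0 ≤ q) (hq1 : q < 1) :
    Summable (fun n : ℕ => (n:ℝ)^β * q^n) := by
  set m := ⌈β⌉₊ with hm
  have h1 : Summable (fun n : ℕ => (n:ℝ)^m * q^n) := by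
    have := summable_pow_mul_geometric_of_norm_lt_one (R := ℝ) m
      (r := q) (by rwa [Real.norm_eq_abs, abs_of_nonneg hq0])
    simpa using this
  have h2 : Summable (fun n : ℕ => q^n) := summable_geometric_of_lt_one hq0 hq1
  have hsm : Summable (fun n : ℕ => ((n:ℝ)^m + 1) * q^n) := by
    have := h1.add h2
    refine this.congr fun n => ?_
    ring
  refine Summable.of_nonneg_of_le (fun n => by positivity) (fun n => ?_) hsm
  have hb : (n:ℝ)^β ≤ (n:ℝ)^m + 1 := by
    rcases Nat.eq_zero_or_pos n with h0 | hpos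
    · subst h0; simp [Real.zero_rpow hβ0.ne']; positivity
    · have h1n : (1:ℝ) ≤ n := by exact_mod_cast hpos
      have hg : (n:ℝ)^β ≤ (n:ℝ)^(m:ℝ) :=
        Real.rpow_le_rpow_of_exponent_le h1n (Nat.le_ceil β)
      rw [Real.rpow_natCast] at hg
      linarith
  exact mul_le_mul_of_nonneg_right hb (by positivity)

lemma aux_int {Ω : Type*} [MeasureSpace Ω] [IsProbabilityMeasure (ℙ : Measure Ω)]
    (Y : Ω → ℕ) (hY : Measurable Y) (g : ℕ → ℝ) (hg : ∀ n, 0 ≤ g n)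
    (hI : Integrable (fun ω => g (Y ω)) ℙ) :
    Summable (fun n => g n * (ℙ (Y ⁻¹' {n})).toReal) ∧
      (∫ ω, g (Y ω)) = ∑' n, g n * (ℙ (Y ⁻¹' {n})).toReal := by
  have hgm : Measurable g := measurable_from_top
  have hmap : ∀ n : ℕ, (Measure.map Y ℙ) {n} = ℙ (Y ⁻¹' {n}) := fun n =>
    Measure.map_apply hY (measurableSet_singleton n)
  have hIg : Integrable g (Measure.map Y ℙ) := by
    rw [integrable_map_measure hgm.aestronglyMeasurable hY.aemeasurable]
    exact hI
  have hval : (∫ ω, g (Y ω)) = ∑' n, g n * (ℙ (Y ⁻¹' {n})).toReal := by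
    rw [← integral_map hY.aemeasurable hgm.aestronglyMeasurable, integral_countable' hIg]
    refine tsum_congr fun n => ?_
    rw [measureReal_def, hmap n, smul_eq_mul, mul_comm]
  refine ⟨?_, hval⟩
  have hfin : (∑' n, ENNReal.ofReal (g n * (ℙ (Y ⁻¹' {n})).toReal)) ≠ ⊤ := by
    have h1 : (∫⁻ n, ‖g n‖₊ ∂(Measure.map Y ℙ)) < ⊤ := hIg.2
    rw [lintegral_countable'] at h1
    have h2 : ∀ n : ℕ, ENNReal.ofReal (g n * (ℙ (Y ⁻¹' {n})).toReal)
        = (‖g n‖₊ : ℝ≥0∞) * (Measure.map Y ℙ) {n} := by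
      intro n
      rw [ENNReal.ofReal_mul (hg n), hmap n, ENNReal.ofReal_toReal (measure_ne_top _ _)]
      congr 1
      exact (Real.enorm_eq_ofReal (hg n)).symm
    rw [tsum_congr h2]
    exact h1.ne
  exact summable_of_ofReal_ne_top
    (fun n => mul_nonneg (hg n) ENNReal.toReal_nonneg) hfin

end SMB

/-- If `X` is a symmetric log-concave integer-valued random variable, then for all `β ≥ 1`,
`E[|X|^β]^(1/β) ≤ Γ(β+1)^(1/β) · (E[|X|] + 1)`. -/
theorem symmetric_moment_bound
    {Ω : Type*} [MeasureSpace Ω] [IsProbabilityMeasure (ℙ : Measure Ω)]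
    (X : Ω → ℤ) (hX : Measurable X)
    (hlc : IsLogConcavePMF (fun k => (ℙ (X ⁻¹' {k})).toReal))
    (hsym : ∀ k : ℤ, (ℙ (X ⁻¹' {k})).toReal = (ℙ (X ⁻¹' {-k})).toReal)
    (β : ℝ) (hβ : 1 ≤ β) :
    (∫ ω, |(X ω : ℝ)| ^ β) ^ (1 / β) ≤
      Real.Gamma (β + 1) ^ (1 / β) * ((∫ ω, |(X ω : ℝ)|) + 1) := by
  have hβ0 : (0:ℝ) < β := by linarith
  have hβne : β ≠ 0 := ne_of_gt hβ0
  have hΓpos : 0 < Real.Gamma (β+1) := Real.Gamma_pos_of_pos (by linarith)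
  have hInt1nn : 0 ≤ ∫ ω, |(X ω : ℝ)| := integral_nonneg (fun ω => abs_nonneg _)
  by_cases hInt : Integrable (fun ω => |(X ω : ℝ)| ^ β) ℙ
  case neg =>
    rw [integral_undef hInt, Real.zero_rpow (one_div_ne_zero hβne)]
    have h1 : (0:ℝ) ≤ Real.Gamma (β+1) ^ (1/β) := Real.rpow_nonneg hΓpos.le _
    nlinarith
  case pos =>
  -- measurability of basic maps
  have hXr : Measurable (fun ω => (X ω : ℝ)) := by
    exact (measurable_from_top (f := (fun k : ℤ => (k:ℝ)))).comp hX
  set Y : Ω → ℕ := fun ω => (X ω).natAbs with hY_def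
  have hYm : Measurable Y := (measurable_from_top (f := Int.natAbs)).comp hX
  have habs : ∀ ω, |(X ω : ℝ)| = ((Y ω : ℕ) : ℝ) := by
    intro ω
    have h : ((X ω).natAbs : ℝ) = |((X ω : ℤ) : ℝ)| := by
      rw [Nat.cast_natAbs, Int.cast_abs]
    exact h.symm
  -- p and pn
  set p : ℤ → ℝ := fun k => (ℙ (X ⁻¹' {k})).toReal with hp_def
  have hp_nn : ∀ k, 0 ≤ p k := fun k => ENNReal.toReal_nonneg
  have hsym' : ∀ k : ℤ, p k = p (-k) := fun k => hsym k
  set pn : ℕ → ℝ := fun n => p (n : ℤ) with hpn_def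
  have hpn_nn : ∀ n, 0 ≤ pn n := fun n => hp_nn _
  -- monotonicity of pn
  have hmono : ∀ n : ℕ, pn (n+1) ≤ pn n := by
    intro n
    induction n using Nat.strong_induction_on with
    | _ n IH =>
      by_contra hlt
      push_neg at hlt
      rcases Nat.eq_zero_or_pos n with h0 | hpos
      · subst h0
        have h1 := hlc.1 0
        rw [show (0:ℤ)-1 = -1 by ring, show (0:ℤ)+1 = 1 by ring, ← hsym' 1] at h1
        have h3 := hp_nn 0
        simp only [Nat.zero_add] at hlt
        have hlt' : p 0 < p 1 := by simpa [hpn_def] using hlt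
        nlinarith [h1, hlt', h3, mul_self_nonneg (p 1 - p 0)]
      · have hppos : 0 < pn (n+1) := lt_of_le_of_lt (hpn_nn _) hlt
        have hcast : pn (n+1) = p ((n:ℤ)+1) := by
          rw [hpn_def]; norm_cast
        have hpneg : 0 < p (-((n:ℤ)+1)) := by
          rw [← hsym' ((n:ℤ)+1), ← hcast]
          exact hppos
        have hpn_pos : 0 < pn n := by
          have := hlc.2 (-((n:ℤ)+1)) (n:ℤ) ((n:ℤ)+1) (by omega) (by omega) hpneg
            (by rw [← hcast]; exact hppos)
          simpa [hpn_def] using this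
        have hIH : pn n ≤ pn (n-1) := by
          have := IH (n-1) (by omega)
          rwa [show n - 1 + 1 = n by omega] at this
        have hlcn : pn (n-1) * pn (n+1) ≤ pn n ^ 2 := by
          have h1 := hlc.1 (n:ℤ)
          have e1 : ((n:ℤ)) - 1 = ((n-1 : ℕ) : ℤ) := by omega
          have e2 : ((n:ℤ)) + 1 = ((n+1 : ℕ) : ℤ) := by omega
          rw [e1, e2] at h1
          simpa [hpn_def] using h1
        have h5 : pn n * pn n < pn n * pn (n+1) := mul_lt_mul_of_pos_left hlt hpn_pos
        have h6 : pn n * pn (n+1) ≤ pn (n-1) * pn (n+1) :=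
          mul_le_mul_of_nonneg_right hIH hppos.le
        nlinarith [hlcn, h5, h6]
  -- log-concavity of pn
  have hLCn : ∀ n : ℕ, pn (n+2) * pn n ≤ pn (n+1)^2 := by
    intro n
    have h1 := hlc.1 ((n:ℤ)+1)
    have e1 : ((n:ℤ)+1) - 1 = ((n : ℕ) : ℤ) := by omega
    have e2 : ((n:ℤ)+1) + 1 = ((n+2 : ℕ) : ℤ) := by omega
    have e3 : ((n:ℤ)+1) = ((n+1 : ℕ) : ℤ) := by omega
    rw [e1, e2, e3] at h1
    simp only [hpn_def]
    rw [mul_comm]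
    exact h1
  clear_value p pn

  -- aN and total mass
  set aN : ℕ → ℝ := fun n => (ℙ (Y ⁻¹' {n})).toReal with haN_def
  have haN_nn : ∀ n, 0 ≤ aN n := fun n => ENNReal.toReal_nonneg
  have hpartE : (∑' n : ℕ, ℙ (Y ⁻¹' {n})) = 1 := by
    have hd : Pairwise (Function.onFun Disjoint fun n : ℕ => Y ⁻¹' {n}) := by
      intro m n hmn
      exact Disjoint.preimage Y (Set.disjoint_singleton.mpr hmn)
    have hU := (measure_iUnion (μ := (ℙ : Measure Ω)) hd
      (fun n => hYm (measurableSet_singleton n))).symm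
    rw [hU, show (⋃ n : ℕ, Y ⁻¹' {n}) = Set.univ from by ext ω; simp, measure_univ]
  have haN_sum : Summable aN := by
    apply SMB.summable_of_ofReal_ne_top haN_nn
    rw [tsum_congr (fun n => ENNReal.ofReal_toReal (measure_ne_top ℙ _)), hpartE]
    exact ENNReal.one_ne_top
  have haN_tot : (∑' n, aN n) = 1 := by
    have h1 : ENNReal.ofReal (∑' n, aN n) = ENNReal.ofReal 1 := by
      rw [ENNReal.ofReal_tsum_of_nonneg haN_nn haN_sum,
        tsum_congr (fun n => ENNReal.ofReal_toReal (measure_ne_top ℙ _)), hpartE,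
        ENNReal.ofReal_one]
    exact (ENNReal.ofReal_eq_ofReal_iff (tsum_nonneg haN_nn) zero_le_one).mp h1
  -- aN in terms of pn
  have haN0 : aN 0 = pn 0 := by
    have hset : Y ⁻¹' {0} = X ⁻¹' {((0:ℕ):ℤ)} := by
      ext ω
      simp [hY_def, Int.natAbs_eq_zero]
    simp only [haN_def, hpn_def, hp_def, hset]
  have haS : ∀ n : ℕ, aN (n+1) = 2 * pn (n+1) := by
    intro n
    have hne : ((n+1 : ℕ) : ℤ) ≠ -((n+1 : ℕ) : ℤ) := by omega
    have hset : Y ⁻¹' {n+1} = X ⁻¹' {((n+1:ℕ):ℤ)} ∪ X ⁻¹' {-((n+1:ℕ):ℤ)} := by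
      ext ω
      simp only [hY_def, Set.mem_preimage, Set.mem_singleton_iff, Set.mem_union]
      omega
    have hdisj : Disjoint (X ⁻¹' {((n+1:ℕ):ℤ)}) (X ⁻¹' {-((n+1:ℕ):ℤ)}) :=
      Disjoint.preimage X (Set.disjoint_singleton.mpr hne)
    have hm : ℙ (Y ⁻¹' {n+1}) = ℙ (X ⁻¹' {((n+1:ℕ):ℤ)}) + ℙ (X ⁻¹' {-((n+1:ℕ):ℤ)}) := by
      rw [hset, measure_union hdisj (hX (measurableSet_singleton _))]
    have h2 : aN (n+1) = p ((n+1:ℕ):ℤ) + p (-((n+1:ℕ):ℤ)) := by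
      simp only [haN_def, hp_def]
      rw [hm, ENNReal.toReal_add (measure_ne_top _ _) (measure_ne_top _ _)]
    rw [h2, ← hsym' _]
    simp only [hpn_def]
    ring
  clear_value aN
  -- integral values
  have hIb : Integrable (fun ω => ((Y ω : ℕ):ℝ)^β) ℙ := by
    refine hInt.congr (Filter.Eventually.of_forall fun ω => ?_)
    show |(X ω : ℝ)|^β = ((Y ω : ℕ):ℝ)^β
    rw [habs ω]
  obtain ⟨hTsum, hTval⟩ := SMB.aux_int Y hYm (fun n => (n:ℝ)^β)
      (fun n => Real.rpow_nonneg (Nat.cast_nonneg n) β) hIb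
  have hIabs : Integrable (fun ω => ((Y ω : ℕ) : ℝ)) ℙ := by
    have hb : ∀ ω, ‖((Y ω : ℕ):ℝ)‖ ≤ ‖1 + ((Y ω : ℕ):ℝ)^β‖ := by
      intro ω
      have h0 : (0:ℝ) ≤ ((Y ω:ℕ):ℝ) := Nat.cast_nonneg _
      have h2 : (0:ℝ) ≤ ((Y ω:ℕ):ℝ)^β := Real.rpow_nonneg h0 β
      rw [Real.norm_of_nonneg h0, Real.norm_of_nonneg (by linarith)]
      rcases le_or_gt ((Y ω:ℕ):ℝ) 1 with h|h
      · linarith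
      · have h3 := Real.rpow_le_rpow_of_exponent_le h.le hβ
        rw [Real.rpow_one] at h3
        linarith
    exact Integrable.mono ((integrable_const (1:ℝ)).add hIb)
      ((measurable_from_top (f := fun n : ℕ => (n:ℝ))).comp hYm).aestronglyMeasurable
      (Filter.Eventually.of_forall hb)
  obtain ⟨hMsum, hMval⟩ := SMB.aux_int Y hYm (fun n => (n:ℝ))
      (fun n => Nat.cast_nonneg n) hIabs
  set M : ℝ := ∑' n : ℕ, (n:ℝ) * aN n with hM_def
  set T : ℝ := ∑' n : ℕ, (n:ℝ)^β * aN n with hT_def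
  have hMint : (∫ ω, |(X ω : ℝ)|) = M := by
    rw [integral_congr_ae (Filter.Eventually.of_forall (fun ω => habs ω))]
    simp only [hM_def, haN_def]
    exact hMval
  have hTint : (∫ ω, |(X ω : ℝ)|^β) = T := by
    rw [integral_congr_ae (Filter.Eventually.of_forall
      (fun ω => show |(X ω : ℝ)|^β = ((Y ω : ℕ):ℝ)^β by rw [habs ω]))]
    simp only [hT_def, haN_def]
    exact hTval
  have hMnn : 0 ≤ M := by
    rw [hM_def]
    exact tsum_nonneg fun n => mul_nonneg (Nat.cast_nonneg n) (haN_nn n)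
  clear_value M T
  -- Q and S tail sums
  set Q : ℕ → ℝ := fun k => ∑' n, aN (n + k) with hQ_def
  have hQnn : ∀ k, 0 ≤ Q k := fun k => tsum_nonneg fun n => haN_nn _
  have haN_sum_k : ∀ k, Summable (fun n => aN (n + k)) :=
    fun k => (summable_nat_add_iff k).mpr haN_sum
  have hQ0 : Q 0 = 1 := by
    rw [hQ_def]
    simp only
    rw [tsum_congr (fun n => by rw [Nat.add_zero]), haN_tot]
  have hQshift : ∀ k, Q k = aN k + Q (k+1) := by
    intro k
    rw [hQ_def]
    simp only
    rw [Summable.tsum_eq_zero_add (haN_sum_k k), Nat.zero_add]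
    congr 1
    exact tsum_congr fun n => congrArg aN (by omega)
  have hQmono : ∀ k, Q (k+1) ≤ Q k := by
    intro k
    rw [hQshift k]
    linarith [haN_nn k]
  clear_value Q
  have hpn_sum : Summable pn := by
    apply Summable.of_nonneg_of_le hpn_nn (fun n => ?_) haN_sum
    cases n with
    | zero => rw [haN0]
    | succ m => rw [haS m]; linarith [hpn_nn (m+1)]
  set S : ℕ → ℝ := fun k => ∑' n, pn (n + k) with hS_def
  have hpn_sum_k : ∀ k, Summable (fun n => pn (n + k)) :=
    fun k => (summable_nat_add_iff k).mpr hpn_sum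
  have hSnn : ∀ k, 0 ≤ S k := fun k => tsum_nonneg fun n => hpn_nn _
  have hSshift : ∀ k, S k = pn k + S (k+1) := by
    intro k
    rw [hS_def]
    simp only
    rw [Summable.tsum_eq_zero_add (hpn_sum_k k), Nat.zero_add]
    congr 1
    exact tsum_congr fun n => congrArg pn (by omega)
  have hQS : ∀ k, Q (k+1) = 2 * S (k+1) := by
    intro k
    rw [hQ_def, hS_def]
    simp only
    rw [← tsum_mul_left]
    refine tsum_congr fun n => ?_
    rw [show n + (k+1) = (n+k)+1 by omega, haS (n+k)]
  clear_value S
  have hKB1 : ∀ k, S (k+2) * pn k ≤ S (k+1) * pn (k+1) := by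
    intro k
    rw [hS_def]
    simp only
    rw [← tsum_mul_right, ← tsum_mul_right]
    apply Summable.tsum_le_tsum _ ((hpn_sum_k (k+2)).mul_right _) ((hpn_sum_k (k+1)).mul_right _)
    intro n
    have h := SMB.ratio_mono hpn_nn hmono hLCn k (n+k+1) (by omega)
    have e1 : n + (k+2) = (n+k+1)+1 := by omega
    have e2 : n + (k+1) = n+k+1 := by omega
    rw [e1, e2]
    exact h
  have htot : pn 0 + 2 * S 1 = 1 := by
    have h1 := hQshift 0
    rw [hQ0, haN0, hQS 0] at h1
    linarith
  have hKB2 : S 1 * pn 0 ≤ pn 1 := by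
    have h1 : S 1 * pn 0 ≤ S 0 * pn 1 := by
      rw [hS_def]
      simp only
      rw [← tsum_mul_right, ← tsum_mul_right]
      apply Summable.tsum_le_tsum _ ((hpn_sum_k 1).mul_right _) ((hpn_sum_k 0).mul_right _)
      intro n
      have h := SMB.ratio_mono hpn_nn hmono hLCn 0 n (Nat.zero_le n)
      rw [Nat.add_zero]
      exact h
    have hS0 : S 0 = pn 0 + S 1 := hSshift 0
    have hS0le : S 0 ≤ 1 := by
      rw [hS0]
      linarith [hSnn 1]
    calc S 1 * pn 0 ≤ S 0 * pn 1 := h1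
      _ ≤ 1 * pn 1 := mul_le_mul_of_nonneg_right hS0le (hpn_nn 1)
      _ = pn 1 := one_mul _
  have hQLC : ∀ k, Q (k+2) * Q k ≤ Q (k+1)^2 := by
    intro k
    cases k with
    | zero =>
      have g1 : Q 2 = 2 * S 2 := hQS 1
      have g2 : Q 1 = 2 * S 1 := hQS 0
      rw [hQ0, g1, g2, mul_one]
      have hS2 : S 1 = pn 1 + S 2 := hSshift 1
      nlinarith [hKB2, htot, hSnn 1, hSnn 2, hpn_nn 1]
    | succ k =>
      have g1 : Q (k+1+2) = 2 * S (k+3) := hQS (k+2)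
      have g2 : Q (k+1+1) = 2 * S (k+2) := hQS (k+1)
      have g3 : Q (k+1) = 2 * S (k+1) := hQS k
      rw [g1, g2, g3]
      have e1 : S (k+1) = pn (k+1) + S (k+2) := hSshift (k+1)
      have e2 : S (k+2) = pn (k+2) + S (k+3) := hSshift (k+2)
      have e3 : S (k+3) * pn (k+1) ≤ S (k+2) * pn (k+2) := hKB1 (k+1)
      have key : S (k+3) * S (k+1) ≤ S (k+2)^2 := by
        calc S (k+3) * S (k+1) = S (k+3) * pn (k+1) + S (k+3) * S (k+2) := by
              rw [e1]; ring
          _ ≤ S (k+2) * pn (k+2) + S (k+3) * S (k+2) := by linarith [e3]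
          _ = S (k+2) * (pn (k+2) + S (k+3)) := by ring
          _ = S (k+2)^2 := by rw [← e2]; ring
      nlinarith [key]

  -- weights
  set w : ℕ → ℝ := fun n => (n:ℝ)^β - ((n-1:ℕ):ℝ)^β with hw_def
  have hw0 : w 0 = 0 := by simp [hw_def]
  have ew : ∀ j : ℕ, w (j+1) = ((j+1:ℕ):ℝ)^β - ((j:ℕ):ℝ)^β := by
    intro j
    simp [hw_def]
  have hw_nn : ∀ n, 0 ≤ w n := by
    intro n
    cases n with
    | zero => rw [hw0]
    | succ j =>
      rw [ew j]
      have hc : ((j:ℕ):ℝ) ≤ ((j+1:ℕ):ℝ) := by exact_mod_cast Nat.le_succ j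
      have := Real.rpow_le_rpow (Nat.cast_nonneg j) hc hβ0.le
      linarith
  have hwW : ∀ n : ℕ, (∑ j ∈ Finset.range n, w (j+1)) = (n:ℝ)^β := by
    intro n
    calc (∑ j ∈ Finset.range n, w (j+1))
        = ∑ j ∈ Finset.range n, (((j+1:ℕ):ℝ)^β - ((j:ℕ):ℝ)^β) :=
          Finset.sum_congr rfl fun j _ => ew j
      _ = ((n:ℕ):ℝ)^β - ((0:ℕ):ℝ)^β :=
          Finset.sum_range_sub (fun j : ℕ => ((j:ℕ):ℝ)^β) n
      _ = (n:ℝ)^β := by simp [Real.zero_rpow hβne]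
  set eSeq : ℕ → ℝ := fun j => w (j+1) - w j with he_def
  have hesum : ∀ n, (∑ j ∈ Finset.range n, eSeq j) = w n := by
    intro n
    have h := Finset.sum_range_sub w n
    simp only [he_def]
    rw [h, hw0, sub_zero]
  have he_nn : ∀ j, 0 ≤ eSeq j := by
    intro j
    rw [he_def]
    simp only [sub_nonneg]
    cases j with
    | zero =>
      rw [hw0, ew 0]
      simp [Real.zero_rpow hβne, Real.one_rpow]
    | succ j =>
      have hconv := (convexOn_rpow hβ).slope_mono_adjacent
        (Set.mem_Ici.mpr (by positivity : (0:ℝ) ≤ (j:ℝ)))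
        (Set.mem_Ici.mpr (by positivity : (0:ℝ) ≤ (j:ℝ)+2))
        (by linarith : (j:ℝ) < (j:ℝ)+1) (by linarith : (j:ℝ)+1 < (j:ℝ)+2)
      rw [show (j:ℝ)+1-(j:ℝ) = 1 by ring, show (j:ℝ)+2-((j:ℝ)+1) = 1 by ring,
        div_one, div_one] at hconv
      have ew1 : w (j+1+1) = ((j+1+1:ℕ):ℝ)^β - ((j+1:ℕ):ℝ)^β := ew (j+1)
      have ew2 : w (j+1) = ((j+1:ℕ):ℝ)^β - ((j:ℕ):ℝ)^β := ew j
      have c1 : ((j+1:ℕ):ℝ) = (j:ℝ)+1 := by push_cast; ring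
      have c2 : ((j+1+1:ℕ):ℝ) = (j:ℝ)+2 := by push_cast; ring
      rw [ew1, ew2, c1, c2]
      linarith
  clear_value w eSeq
  -- rewrite summability facts in terms of aN
  have hTsum' : Summable (fun n : ℕ => (n:ℝ)^β * aN n) := by
    simp only [haN_def]
    exact hTsum
  have hMsum' : Summable (fun n : ℕ => (n:ℝ) * aN n) := by
    simp only [haN_def]
    exact hMsum
  -- first swap for aN
  have hsum_bw : Summable (fun n : ℕ => (∑ j ∈ Finset.range n, w (j+1)) * aN n) := by
    refine hTsum'.congr fun n => ?_
    rw [hwW n]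
  obtain ⟨hsw1S, hsw1E⟩ := SMB.swR (fun j => w (j+1)) aN (fun j => hw_nn _)
    haN_nn haN_sum hsum_bw
  have hT1 : T = ∑' k, w (k+1) * Q (k+1) := by
    have l1 : T = ∑' n : ℕ, (∑ j ∈ Finset.range n, w (j+1)) * aN n := by
      rw [hT_def]
      exact tsum_congr fun n => by rw [hwW n]
    rw [l1, hsw1E]
    simp only [hQ_def]
  -- M identity
  have hsum_1a : Summable (fun n : ℕ => (∑ j ∈ Finset.range n, (1:ℝ)) * aN n) := by
    refine hMsum'.congr fun n => ?_
    simp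
  obtain ⟨hswMS, hswME⟩ := SMB.swR (fun _ => (1:ℝ)) aN (fun _ => zero_le_one)
    haN_nn haN_sum hsum_1a
  have hMQ : M = ∑' k, Q (k+1) := by
    have l1 : M = ∑' n : ℕ, (∑ j ∈ Finset.range n, (1:ℝ)) * aN n := by
      rw [hM_def]
      exact tsum_congr fun n => by simp
    rw [l1, hswME]
    simp only [hQ_def]
    exact tsum_congr fun k => one_mul _
  have hQ1sum : Summable (fun k => Q (k+1)) := by
    have h := hswMS
    simp only [one_mul] at h
    simp only [hQ_def]
    exact h
  have hQsum : Summable Q := (summable_nat_add_iff 1).mp hQ1sum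
  -- second swap
  have hsw1S' : Summable (fun k => w (k+1) * Q (k+1)) := by
    simp only [hQ_def]
    exact hsw1S
  have hsum_wQ : Summable (fun n => w n * Q n) := (summable_nat_add_iff 1).mp hsw1S'
  have hsum_eQ : Summable (fun n : ℕ => (∑ j ∈ Finset.range n, eSeq j) * Q n) := by
    refine hsum_wQ.congr fun n => ?_
    rw [hesum n]
  obtain ⟨hsw2S, hsw2E⟩ := SMB.swR eSeq Q he_nn hQnn hQsum hsum_eQ
  have hmid : (∑' n, (∑ j ∈ Finset.range n, eSeq j) * Q n) = ∑' k, w (k+1) * Q (k+1) := by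
    rw [tsum_congr (fun n => by rw [hesum n] :
      ∀ n, (∑ j ∈ Finset.range n, eSeq j) * Q n = w n * Q n)]
    rw [Summable.tsum_eq_zero_add hsum_wQ, hw0, zero_mul, zero_add]
  have hT2 : T = ∑' k, eSeq k * ∑' n, Q (n + (k+1)) := by
    rw [hT1, ← hmid, hsw2E]
  -- apply the crossing lemma
  set q : ℝ := M / (M+1) with hq_def
  have hM1 : (0:ℝ) < M+1 := by linarith
  have hq0 : 0 ≤ q := by rw [hq_def]; positivity
  have hq1 : q < 1 := by
    rw [hq_def]
    exact (div_lt_one hM1).mpr (by linarith)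
  have h1q : (0:ℝ) < 1 - q := by linarith
  clear_value q
  have hRbound := SMB.lemA hQnn hQ0 hQmono hQLC hQsum hMQ hq_def
  -- geometric mirror
  set b : ℕ → ℝ := fun n => (1-q) * q^n with hb_def
  clear_value b
  have hb_nn : ∀ n, 0 ≤ b n := by
    intro n
    rw [hb_def]
    simp only
    exact mul_nonneg (by linarith) (pow_nonneg hq0 n)
  have hgeo : Summable (fun n : ℕ => q^n) := summable_geometric_of_lt_one hq0 hq1
  have hb_sum : Summable b := by
    rw [hb_def]
    exact hgeo.mul_left (1-q)
  have hbW : Summable (fun n : ℕ => (n:ℝ)^β * b n) := by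
    simp only [hb_def]
    have h := (SMB.summable_rpow_geom hβ0 hq0 hq1).mul_left (1-q)
    refine h.congr fun n => ?_
    ring
  have hsum_bwb : Summable (fun n : ℕ => (∑ j ∈ Finset.range n, w (j+1)) * b n) := by
    refine hbW.congr fun n => ?_
    rw [hwW n]
  obtain ⟨hgw1S, hgw1E⟩ := SMB.swR (fun j => w (j+1)) b (fun j => hw_nn _)
    hb_nn hb_sum hsum_bwb
  have hinvq : (1-q)⁻¹ = M+1 := by
    have h1 : 1 - q = 1/(M+1) := by
      rw [hq_def]
      field_simp
      ring
    rw [h1, one_div, inv_inv]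
  have hbtail : ∀ k : ℕ, (∑' n, b (n + k)) = q^k := by
    intro k
    have h1 : (∑' n : ℕ, q^(n+k)) = (1-q)⁻¹ * q^k := by
      rw [tsum_congr (fun n => pow_add q n k), tsum_mul_right,
        tsum_geometric_of_lt_one hq0 hq1]
    have l2 : (∑' n, b (n + k)) = (1-q) * ∑' n : ℕ, q^(n+k) := by
      rw [hb_def]
      simp only
      exact tsum_mul_left
    rw [l2, h1]
    field_simp
  have hbT1 : (∑' n : ℕ, (n:ℝ)^β * b n) = ∑' k, w (k+1) * q^(k+1) := by
    have l1 : (∑' n : ℕ, (n:ℝ)^β * b n)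
        = ∑' n : ℕ, (∑ j ∈ Finset.range n, w (j+1)) * b n :=
      tsum_congr fun n => by rw [hwW n]
    rw [l1, hgw1E]
    exact tsum_congr fun k => by rw [hbtail (k+1)]
  have hsum_wq1 : Summable (fun k : ℕ => w (k+1) * q^(k+1)) := by
    have hs := (summable_nat_add_iff 1).mpr (SMB.summable_rpow_geom hβ0 hq0 hq1)
    refine Summable.of_nonneg_of_le
      (fun k => mul_nonneg (hw_nn _) (pow_nonneg hq0 _)) (fun k => ?_) hs
    apply mul_le_mul_of_nonneg_right _ (pow_nonneg hq0 _)
    rw [ew k]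
    have h0 : (0:ℝ) ≤ ((k:ℕ):ℝ)^β := by positivity
    linarith
  have hsum_wg : Summable (fun n : ℕ => w n * q^n) := (summable_nat_add_iff 1).mp hsum_wq1
  have hsum_eg : Summable (fun n : ℕ => (∑ j ∈ Finset.range n, eSeq j) * q^n) := by
    refine hsum_wg.congr fun n => ?_
    rw [hesum n]
  obtain ⟨hgw2S, hgw2E⟩ := SMB.swR eSeq (fun n => q^n) he_nn (fun n => pow_nonneg hq0 n)
    hgeo hsum_eg
  have hgmid : (∑' n : ℕ, (∑ j ∈ Finset.range n, eSeq j) * q^n) = ∑' k, w (k+1) * q^(k+1) := by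
    rw [tsum_congr (fun n => by rw [hesum n] :
      ∀ n, (∑ j ∈ Finset.range n, eSeq j) * q^n = w n * q^n)]
    rw [Summable.tsum_eq_zero_add hsum_wg, hw0, zero_mul, zero_add]
  have hgT2 : (∑' n : ℕ, (n:ℝ)^β * b n) = ∑' k, eSeq k * ∑' n : ℕ, q^(n + (k+1)) := by
    rw [hbT1, ← hgmid, hgw2E]
  have hgtail : ∀ k : ℕ, (∑' n : ℕ, q^(n + (k+1))) = (M+1) * q^(k+1) := by
    intro k
    rw [tsum_congr (fun n => pow_add q n (k+1)), tsum_mul_right,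
      tsum_geometric_of_lt_one hq0 hq1, hinvq]
  -- comparison
  have hcomp : T ≤ ∑' n : ℕ, (n:ℝ)^β * b n := by
    rw [hT2, hgT2]
    refine Summable.tsum_le_tsum (fun k => ?_) hsw2S hgw2S
    rw [hgtail k]
    exact mul_le_mul_of_nonneg_left (hRbound k) (he_nn k)
  have hfinal : T ≤ Real.Gamma (β+1) * (M+1)^β := by
    have l1 : (∑' n : ℕ, (n:ℝ)^β * b n) = (1-q) * ∑' n : ℕ, (n:ℝ)^β * q^n := by
      rw [← tsum_mul_left]
      refine tsum_congr fun n => ?_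
      rw [hb_def]
      ring
    have h2 := SMB.analytic hβ hq0 hq1
    have h3 : (1/(1-q)) = M+1 := by rw [one_div, hinvq]
    calc T ≤ ∑' n : ℕ, (n:ℝ)^β * b n := hcomp
      _ = (1-q) * ∑' n : ℕ, (n:ℝ)^β * q^n := l1
      _ ≤ Real.Gamma (β+1) * (1/(1-q))^β := h2
      _ = Real.Gamma (β+1) * (M+1)^β := by rw [h3]
  -- wrap up
  rw [hTint, hMint]
  have hTnn : 0 ≤ T := by
    rw [hT_def]
    exact tsum_nonneg fun n => mul_nonneg (by positivity) (haN_nn n)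
  calc T ^ (1/β) ≤ (Real.Gamma (β+1) * (M+1)^β) ^ (1/β) :=
        Real.rpow_le_rpow hTnn hfinal (by positivity)
    _ = Real.Gamma (β+1) ^ (1/β) * ((M+1)^β) ^ (1/β) :=
        Real.mul_rpow hΓpos.le (Real.rpow_nonneg (by linarith) β)
    _ = Real.Gamma (β+1) ^ (1/β) * (M+1) := by
        rw [← Real.rpow_mul (by linarith : (0:ℝ) ≤ M+1), mul_one_div, div_self hβne,
          Real.rpow_one]
end

section
/- If X is a log-concave integer-valued random variable, then for all t ≥ 0, P(|X − E[X]| ≥ t) ≤ 2·exp(−t / (2·(2·E[|X − E[X]|] + 1))). -/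
open MeasureTheory ProbabilityTheory
open scoped ProbabilityTheory

/-- ratio inequality for log-concave nonneg sequences with interval support -/
lemma seq_ratio {p : ℤ → ℝ} (hp0 : ∀ k, 0 ≤ p k)
    (h1 : ∀ k : ℤ, p (k - 1) * p (k + 1) ≤ p k ^ 2)
    (h2 : ∀ a b c : ℤ, a ≤ b → b ≤ c → 0 < p a → 0 < p c → 0 < p b) :
    ∀ i j : ℤ, i ≤ j → p (i - 1) * p (j + 1) ≤ p i * p j := by
  intro i j hij
  rcases eq_or_lt_of_le (hp0 (i-1)) with hzi | hzi
  · rw [← hzi]; simpa using mul_nonneg (hp0 i) (hp0 j)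
  rcases eq_or_lt_of_le (hp0 (j+1)) with hzj | hzj
  · rw [← hzj]; simpa using mul_nonneg (hp0 i) (hp0 j)
  have hpos : ∀ k, i - 1 ≤ k → k ≤ j + 1 → 0 < p k := fun k hk1 hk2 =>
    h2 (i-1) k (j+1) hk1 hk2 hzi hzj
  -- induction on n = j - i
  have key : ∀ n : ℕ, ∀ i : ℤ, (∀ k, i - 1 ≤ k → k ≤ i + n + 1 → 0 < p k) →
      p (i - 1) * p (i + n + 1) ≤ p i * p (i + n) := by
    intro n
    induction n with
    | zero => intro i _; simpa [sq] using h1 i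
    | succ n ih =>
      intro i hpos
      have hpos' : ∀ k, i - 1 ≤ k → k ≤ i + n + 1 → 0 < p k := fun k hk1 hk2 =>
        hpos k hk1 (by omega)
      have H1 : p (i - 1) * p (i + n + 1) ≤ p i * p (i + n) := ih i hpos'
      have H2 : p (i + n) * p (i + n + 2) ≤ p (i + n + 1) ^ 2 := by
        have := h1 (i + n + 1); simpa [show i + n + 1 - 1 = i + n by ring,
          show i + n + 1 + 1 = i + n + 2 by ring] using this
      have hc : 0 < p (i + n + 1) * p (i + n) :=
        mul_pos (hpos _ (by omega) (by omega)) (hpos _ (by omega) (by omega))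
      have := mul_le_mul H1 H2 (mul_nonneg (hp0 _) (hp0 _))
        (mul_nonneg (hp0 _) (hp0 _))
      have hgoal : (p (i - 1) * p (i + (n+1) + 1)) * (p (i + n + 1) * p (i + n)) ≤
          (p i * p (i + (n+1))) * (p (i + n + 1) * p (i + n)) := by
        have e1 : i + ((n:ℤ)+1) + 1 = i + (n:ℤ) + 2 := by ring
        have e2 : i + ((n:ℤ)+1) = i + (n:ℤ) + 1 := by ring
        push_cast
        rw [e1, e2]; nlinarith [this]
      exact le_of_mul_le_mul_right hgoal hc
  have hn : j = i + ((j - i).toNat : ℤ) := by omega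
  calc p (i-1) * p (j+1) = p (i-1) * p (i + ((j-i).toNat:ℤ) + 1) := by rw [← hn]
    _ ≤ p i * p (i + ((j-i).toNat:ℤ)) := key _ i (fun k hk1 hk2 => hpos k hk1 (by omega))
    _ = p i * p j := by rw [← hn]

open MeasureTheory ProbabilityTheory
open scoped ProbabilityTheory

/-- abstract: tails of log-concave sequences are log-concave -/
lemma tail_logconcave (p q : ℤ → ℝ) (hp0 : ∀ k, 0 ≤ p k)
    (hratio : ∀ i j : ℤ, i ≤ j → p (i - 1) * p (j + 1) ≤ p i * p j)
    (hsum : ∀ m : ℤ, Summable fun j : ℕ => p (m + (j:ℤ)))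
    (hqe : ∀ m : ℤ, q m = ∑' j : ℕ, p (m + (j:ℤ))) (n : ℤ) :
    q n * q (n + 2) ≤ q (n + 1) ^ 2 := by
  have hq0 : ∀ k, 0 ≤ q k := by
    intro k; rw [hqe k]
    exact tsum_nonneg (fun j => hp0 _)
  have hsplit : ∀ m : ℤ, q m = p m + q (m + 1) := by
    intro m
    rw [hqe m, hqe (m+1), Summable.tsum_eq_zero_add (hsum m)]
    simp only [Nat.cast_zero, add_zero]
    congr 1
    apply tsum_congr; intro j
    congr 1; push_cast; ring
  have key : p n * q (n+2) ≤ p (n+1) * q (n+1) := by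
    rw [hqe (n+2), hqe (n+1), ← tsum_mul_left, ← tsum_mul_left]
    refine Summable.tsum_le_tsum (fun j => ?_) ((hsum _).mul_left _) ((hsum _).mul_left _)
    have h := hratio (n+1) (n+1+j) (by omega)
    rw [show (n:ℤ)+1-1 = n by ring, show (n:ℤ)+1+(j:ℤ)+1 = n+2+j by ring] at h
    exact h
  calc q n * q (n+2) = p n * q (n+2) + q (n+1) * q (n+2) := by rw [hsplit n]; ring
    _ ≤ p (n+1) * q (n+1) + q (n+1) * q (n+2) := by nlinarith [hq0 (n+2), hq0 (n+1)]
    _ = q (n+1) * (p (n+1) + q (n+2)) := by ring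
    _ = q (n+1) ^ 2 := by
        have h2 := hsplit (n+1)
        have e : n+1+1 = n+2 := by ring
        rw [e] at h2
        rw [← h2]; ring

section Meas
variable {Ω : Type*} [MeasureSpace Ω] [IsProbabilityMeasure (ℙ : Measure Ω)]

lemma tail_set_eq (X : Ω → ℤ) (n : ℤ) :
    X ⁻¹' (Set.Ici n) = ⋃ j : ℕ, X ⁻¹' {n + (j : ℤ)} := by
  ext ω
  simp only [Set.mem_preimage, Set.mem_Ici, Set.mem_iUnion, Set.mem_singleton_iff]
  constructor
  · intro h; exact ⟨(X ω - n).toNat, by omega⟩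
  · rintro ⟨j, hj⟩; omega

lemma meas_tail (X : Ω → ℤ) (hX : Measurable X) (n : ℤ) :
    ℙ (X ⁻¹' (Set.Ici n)) = ∑' j : ℕ, ℙ (X ⁻¹' {n + (j : ℤ)}) := by
  rw [tail_set_eq]
  refine measure_iUnion ?_ (fun j => hX trivial)
  intro i j hij
  refine Set.disjoint_left.2 fun ω hi hj => ?_
  simp only [Set.mem_preimage, Set.mem_singleton_iff] at hi hj
  omega

lemma summable_tail (X : Ω → ℤ) (hX : Measurable X) (n : ℤ) :
    Summable (fun j : ℕ => (ℙ (X ⁻¹' {n + (j : ℤ)})).toReal) := by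
  refine ENNReal.summable_toReal ?_
  rw [← meas_tail X hX n]
  exact measure_ne_top _ _

lemma qtail_eq (X : Ω → ℤ) (hX : Measurable X) (n : ℤ) :
    (ℙ (X ⁻¹' (Set.Ici n))).toReal = ∑' j : ℕ, (ℙ (X ⁻¹' {n + (j : ℤ)})).toReal := by
  rw [meas_tail X hX n, ENNReal.tsum_toReal_eq (fun _ => measure_ne_top _ _)]

end Meas

open Finset

lemma chord (q : ℤ → ℝ) (hq0 : ∀ k, 0 ≤ q k) (hmono : ∀ n : ℤ, q (n+1) ≤ q n)
    (hlcq : ∀ n : ℤ, q n * q (n + 2) ≤ q (n + 1) ^ 2)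
    (a : ℤ) (h k : ℕ) (hhk : h ≤ k) :
    q a ^ (k - h) * q (a + (k:ℤ)) ^ h ≤ q (a + (h:ℤ)) ^ k := by
  have qmono : ∀ i j : ℤ, i ≤ j → q j ≤ q i := by
    intro i j hij
    have : ∀ d : ℕ, q (i + d) ≤ q i := by
      intro d; induction d with
      | zero => simp
      | succ d ih =>
        calc q (i + (d+1:ℕ)) = q ((i + d) + 1) := by congr 1; push_cast; ring
          _ ≤ q (i + d) := hmono _
          _ ≤ q i := ih
    have e : j = i + ((j - i).toNat : ℤ) := by omega
    rw [e]; exact this _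
  rcases Nat.eq_zero_or_pos h with hh0 | hh0
  · subst hh0; simp
  rcases eq_or_lt_of_le (hq0 (a + k)) with hz | hqk
  · rw [← hz, zero_pow (by omega), mul_zero]
    exact pow_nonneg (hq0 _) _
  have hpos : ∀ i : ℕ, i ≤ k → 0 < q (a + (i:ℤ)) :=
    fun i hi => lt_of_lt_of_le hqk (qmono _ _ (by omega))
  set ρ : ℕ → ℝ := fun i => q (a + i + 1) / q (a + i) with hρ
  have hρpos : ∀ i, i < k → 0 < ρ i := by
    intro i hi
    apply div_pos
    · have := hpos (i+1) (by omega)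
      rwa [show a + ((i:ℕ)+1:ℕ) = a + i + 1 by push_cast; ring] at this
    · exact hpos i (by omega)
  have hprod : ∀ n : ℕ, n ≤ k → q (a + (n:ℤ)) = q a * ∏ i ∈ range n, ρ i := by
    intro n hn
    induction n with
    | zero => simp
    | succ n ih =>
      rw [prod_range_succ, ← mul_assoc, ← ih (by omega), hρ]
      have hne : q (a + (n:ℤ)) ≠ 0 := ne_of_gt (hpos n (by omega))
      field_simp
      congr 1; push_cast; ring
  have hρstep : ∀ i : ℕ, i + 2 ≤ k → ρ (i+1) ≤ ρ i := by
    intro i hi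
    have h0 : 0 < q (a + i) := hpos i (by omega)
    have h1 : 0 < q (a + i + 1) := by
      have := hpos (i+1) (by omega)
      rwa [show a + ((i:ℕ)+1:ℕ) = a + i + 1 by push_cast; ring] at this
    have hlc := hlcq (a + i)
    simp only [hρ]
    push_cast
    rw [show a + ((i:ℤ) + 1) + 1 = a + i + 2 by ring,
      show a + ((i:ℤ) + 1) = a + i + 1 by ring, div_le_div_iff₀ h1 h0]
    nlinarith
  have hρmono : ∀ d i : ℕ, i + d < k → ρ (i + d) ≤ ρ i := by
    intro d
    induction d with
    | zero => intro i _; simp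
    | succ d ih =>
      intro i hi
      calc ρ (i + (d+1)) = ρ ((i+d) + 1) := rfl
        _ ≤ ρ (i + d) := hρstep _ (by omega)
        _ ≤ ρ i := ih i (by omega)
  have hρmono' : ∀ i j : ℕ, i ≤ j → j < k → ρ j ≤ ρ i := by
    intro i j hij hj
    have := hρmono (j - i) i (by omega)
    rwa [show i + (j-i) = j by omega] at this
  obtain ⟨d, hd⟩ : ∃ d, k = h + d := ⟨k - h, by omega⟩
  subst hd
  rcases Nat.eq_zero_or_pos d with hd0 | hd0
  · subst hd0; simp
  rw [hprod (h+d) le_rfl, hprod h (by omega), Nat.add_sub_cancel_left]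
  rw [prod_range_add]
  set Ph := ∏ i ∈ range h, ρ i with hPh
  set T := ∏ i ∈ range d, ρ (h + i) with hT
  have hPhpos : 0 < Ph := prod_pos (fun i hi => hρpos i (by simp at hi; omega))
  have hTnn : 0 ≤ T := le_of_lt (prod_pos (fun i hi => hρpos _ (by simp at hi; omega)))
  have hpiv : 0 < ρ (h-1) := hρpos _ (by omega)
  have hTle : T ≤ ρ (h-1) ^ d := by
    have h1 : T ≤ ∏ _i ∈ range d, ρ (h-1) := by
      refine prod_le_prod (fun i hi => le_of_lt (hρpos _ ?_)) (fun i hi => ?_)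
      · simp only [mem_range] at hi; omega
      · simp only [mem_range] at hi
        exact hρmono' (h-1) (h+i) (by omega) (by omega)
    simpa using h1
  have hPge : ρ (h-1) ^ h ≤ Ph := by
    have h1 : (∏ _i ∈ range h, ρ (h-1)) ≤ Ph := by
      refine prod_le_prod (fun i hi => le_of_lt hpiv) (fun i hi => ?_)
      simp only [mem_range] at hi
      exact hρmono' i (h-1) (by omega) (by omega)
    simpa using h1
  have key : T ^ h ≤ Ph ^ d := by
    calc T ^ h ≤ (ρ (h-1) ^ d) ^ h := pow_le_pow_left₀ hTnn hTle h
      _ = (ρ (h-1) ^ h) ^ d := by rw [← pow_mul, ← pow_mul, Nat.mul_comm]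
      _ ≤ Ph ^ d := pow_le_pow_left₀ (le_of_lt (pow_pos hpiv h)) hPge _
  have lhs_eq : q a ^ d * (q a * (Ph * T)) ^ h = q a ^ (h+d) * (Ph ^ h * T ^ h) := by
    rw [mul_pow, mul_pow, pow_add]; ring
  have rhs_eq : (q a * Ph) ^ (h+d) = q a ^ (h+d) * Ph ^ (h+d) := mul_pow _ _ _
  rw [lhs_eq, rhs_eq]
  refine mul_le_mul_of_nonneg_left ?_ (pow_nonneg (hq0 a) _)
  calc Ph ^ h * T ^ h ≤ Ph ^ h * Ph ^ d := mul_le_mul_of_nonneg_left key (by positivity)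
    _ = Ph ^ (h+d) := (pow_add _ _ _).symm


/-- a log-concave-ish sequence with bounded partial sums has a geometric tail -/
lemma geom_tail (p : ℤ → ℝ) (hp0 : ∀ k, 0 ≤ p k)
    (h2 : ∀ a b c : ℤ, a ≤ b → b ≤ c → 0 < p a → 0 < p c → 0 < p b)
    (hratio : ∀ i j : ℤ, i ≤ j → p (i - 1) * p (j + 1) ≤ p i * p j)
    (hsum1 : ∀ s : Finset ℤ, ∑ k ∈ s, p k ≤ 1) :
    ∃ (k₁ : ℤ) (C r : ℝ), 0 ≤ C ∧ 0 < r ∧ r < 1 ∧ ∀ j : ℕ, p (k₁ + j) ≤ C * r ^ j := by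
  by_cases hb : ∃ B : ℤ, ∀ k : ℤ, B ≤ k → p k = 0
  · obtain ⟨B, hB⟩ := hb
    refine ⟨B, 0, 1/2, le_rfl, by norm_num, by norm_num, fun j => ?_⟩
    rw [hB _ (by omega), zero_mul]
  push_neg at hb
  -- no increasing-forever run: find a strict-descent point
  have hdesc : ∃ k₀ : ℤ, 0 < p k₀ ∧ p (k₀ + 1) < p k₀ := by
    by_contra hno
    push_neg at hno
    obtain ⟨kstar, _, hkpos'⟩ := hb 0
    have hkpos : 0 < p kstar := lt_of_le_of_ne (hp0 _) (Ne.symm hkpos')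
    have hmono : ∀ j : ℕ, p kstar ≤ p (kstar + j) := by
      intro j; induction j with
      | zero => simp
      | succ j ih =>
        have hpos : 0 < p (kstar + j) := lt_of_lt_of_le hkpos ih
        have := hno (kstar + j) hpos
        calc p kstar ≤ p (kstar + j) := ih
          _ ≤ p (kstar + j + 1) := this
          _ = p (kstar + (j + 1 : ℕ)) := by congr 1; push_cast; ring
    obtain ⟨N, hN⟩ := exists_nat_gt (1 / p kstar)
    have hNp : 1 < N * p kstar := by
      rw [div_lt_iff₀ hkpos] at hN; linarith
    have hinj : Set.InjOn (fun j : ℕ => kstar + (j:ℤ)) (Finset.range N) := by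
      intro x _ y _ hxy; simp at hxy; omega
    have hsum := hsum1 ((Finset.range N).image (fun j : ℕ => kstar + (j:ℤ)))
    rw [Finset.sum_image hinj] at hsum
    have : (N : ℝ) * p kstar ≤ ∑ j ∈ Finset.range N, p (kstar + (j:ℤ)) := by
      calc (N:ℝ) * p kstar = ∑ _j ∈ Finset.range N, p kstar := by
            rw [Finset.sum_const, Finset.card_range, nsmul_eq_mul]
        _ ≤ _ := Finset.sum_le_sum (fun j _ => hmono j)
    linarith
  obtain ⟨k₀, hk₀, hdec⟩ := hdesc
  have hnext : 0 < p (k₀ + 1) := by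
    obtain ⟨k, hk, hkne⟩ := hb (k₀ + 1)
    rcases eq_or_lt_of_le hk with rfl | hlt
    · exact lt_of_le_of_ne (hp0 _) (Ne.symm hkne)
    · exact h2 k₀ (k₀+1) k (by omega) (by omega) hk₀ (lt_of_le_of_ne (hp0 _) (Ne.symm hkne))
  refine ⟨k₀, p k₀, p (k₀ + 1) / p k₀, hp0 _, div_pos hnext hk₀,
    (div_lt_one hk₀).2 hdec, ?_⟩
  intro j
  induction j with
  | zero => simp
  | succ j ih =>
    rcases Nat.eq_zero_or_pos j with rfl | hj
    · have : p k₀ * (p (k₀+1) / p k₀) ^ 1 = p (k₀ + 1) := by field_simp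
      rw [this]; norm_num
    · have hr := hratio (k₀ + 1) (k₀ + j) (by omega)
      rw [show k₀ + 1 - 1 = k₀ by ring] at hr
      -- p k₀ * p (k₀+j+1) ≤ p (k₀+1) * p (k₀+j)
      have e : k₀ + ((j:ℕ)+1:ℕ) = (k₀ + (j:ℤ)) + 1 := by push_cast; ring
      rw [e]
      have step : p (k₀ + (j:ℤ) + 1) ≤ (p (k₀+1) / p k₀) * p (k₀ + (j:ℤ)) := by
        rw [div_mul_eq_mul_div, le_div_iff₀ hk₀]
        nlinarith
      calc p (k₀ + (j:ℤ) + 1) ≤ (p (k₀+1) / p k₀) * p (k₀ + (j:ℤ)) := step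
        _ ≤ (p (k₀+1) / p k₀) * (p k₀ * (p (k₀+1) / p k₀) ^ j) := by
            refine mul_le_mul_of_nonneg_left ih (le_of_lt (div_pos hnext hk₀))
        _ = p k₀ * (p (k₀+1) / p k₀) ^ (j+1) := by ring

lemma nat_bound (p : ℤ → ℝ) (hp1 : ∀ k, p k ≤ 1) (k₁ : ℤ) (C r : ℝ) (hC : 0 ≤ C)
    (hr0 : 0 < r) (hr1 : r < 1) (hgeom : ∀ j : ℕ, p (k₁ + j) ≤ C * r ^ j) :
    ∃ C', 0 ≤ C' ∧ ∀ n : ℕ, p n ≤ C' * r ^ n := by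
  refine ⟨max (C * r ^ (-k₁)) (r ^ (-k₁)), le_trans (by positivity : (0:ℝ) ≤ r ^ (-k₁)) (le_max_right _ _), fun n => ?_⟩
  rcases le_or_gt k₁ (n:ℤ) with hk | hk
  · have h1 := hgeom ((n:ℤ) - k₁).toNat
    rw [show k₁ + (((n:ℤ) - k₁).toNat : ℤ) = (n:ℤ) by omega] at h1
    have h2 : (r : ℝ) ^ (((n:ℤ) - k₁).toNat) = r ^ ((n:ℤ) - k₁) := by
      rw [← zpow_natCast]; congr 1; omega
    calc p n ≤ C * r ^ ((n:ℤ) - k₁) := by rw [← h2]; exact h1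
      _ = (C * r ^ (-k₁)) * r ^ (n:ℤ) := by
          rw [mul_assoc, ← zpow_add₀ (ne_of_gt hr0)]; congr 2; ring
      _ ≤ max (C * r ^ (-k₁)) (r ^ (-k₁)) * r ^ (n:ℤ) :=
          mul_le_mul_of_nonneg_right (le_max_left _ _) (by positivity)
      _ = max (C * r ^ (-k₁)) (r ^ (-k₁)) * r ^ n := by rw [zpow_natCast]
  · have h1 : (1:ℝ) ≤ r ^ ((n:ℤ) - k₁) := by
      have he : r ^ ((n:ℤ) - k₁) = (r ^ (k₁ - (n:ℤ)))⁻¹ := by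
        rw [← zpow_neg]; congr 1; ring
      have hle : r ^ (k₁ - (n:ℤ)) ≤ 1 := by
        have : r ^ (k₁ - (n:ℤ)) = r ^ ((k₁ - (n:ℤ)).toNat) := by
          rw [← zpow_natCast]; congr 1; omega
        rw [this]
        exact pow_le_one₀ (le_of_lt hr0) (le_of_lt hr1)
      rw [he]
      exact one_le_inv_iff₀.2 ⟨by positivity, hle⟩
    calc p n ≤ 1 := hp1 n
      _ ≤ r ^ ((n:ℤ) - k₁) := h1
      _ = r ^ (-k₁) * r ^ (n:ℤ) := by rw [← zpow_add₀ (ne_of_gt hr0)]; congr 1; ring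
      _ ≤ max (C * r ^ (-k₁)) (r ^ (-k₁)) * r ^ (n:ℤ) :=
          mul_le_mul_of_nonneg_right (le_max_right _ _) (by positivity)
      _ = max (C * r ^ (-k₁)) (r ^ (-k₁)) * r ^ n := by rw [zpow_natCast]

section IntegrableSec
variable {Ω : Type*} [MeasureSpace Ω] [IsProbabilityMeasure (ℙ : Measure Ω)]

lemma finset_sum_le_one (X : Ω → ℤ) (hX : Measurable X) (s : Finset ℤ) :
    ∑ k ∈ s, (ℙ (X ⁻¹' {k})).toReal ≤ 1 := by
  have hdisj : (s : Set ℤ).PairwiseDisjoint (fun k => X ⁻¹' {k}) := by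
    intro i _ j _ hij
    refine Set.disjoint_left.2 fun ω hi hj => ?_
    simp only [Set.mem_preimage, Set.mem_singleton_iff] at hi hj
    omega
  have hm : ∑ k ∈ s, ℙ (X ⁻¹' {k}) = ℙ (⋃ k ∈ s, X ⁻¹' {k}) :=
    (measure_biUnion_finset hdisj (fun k _ => hX trivial)).symm
  calc ∑ k ∈ s, (ℙ (X ⁻¹' {k})).toReal
      = (∑ k ∈ s, ℙ (X ⁻¹' {k})).toReal := (ENNReal.toReal_sum (fun k _ => measure_ne_top _ _)).symm
    _ = (ℙ (⋃ k ∈ s, X ⁻¹' {k})).toReal := by rw [hm]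
    _ ≤ 1 := by
        have := prob_le_one (μ := (ℙ : Measure Ω)) (s := ⋃ k ∈ s, X ⁻¹' {k})
        exact ENNReal.toReal_le_of_le_ofReal (by norm_num) (by simpa using this)

lemma integrable_of_geom_bounds (X : Ω → ℤ) (hX : Measurable X) (C r : ℝ)
    (hC : 0 ≤ C) (hr0 : 0 < r) (hr1 : r < 1)
    (hbd : ∀ k : ℤ, (ℙ (X ⁻¹' {k})).toReal ≤ C * r ^ k.natAbs) :
    Integrable (fun ω => (X ω : ℝ)) ℙ := by
  set p : ℤ → ℝ := fun k => (ℙ (X ⁻¹' {k})).toReal with hp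
  set u : ℤ → ℝ := fun k => (|(k:ℝ)| + 1) * (C * r ^ k.natAbs) with hu
  have hu0 : ∀ k, 0 ≤ u k := by intro k; rw [hu]; positivity
  have husum : Summable u := by
    have hnat : Summable (fun n : ℕ => ((n:ℝ) + 1) * (C * r ^ n)) := by
      have h1 : Summable (fun n : ℕ => (n:ℝ) * r ^ n) := by
        have := summable_pow_mul_geometric_of_norm_lt_one 1 (r := r)
          (by rw [Real.norm_eq_abs, abs_of_pos hr0]; exact hr1)
        simpa using this
      have h2 : Summable (fun n : ℕ => r ^ n) := summable_geometric_of_lt_one (le_of_lt hr0) hr1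
      have := (h1.add h2).mul_left C
      refine this.congr (fun n => ?_)
      ring
    refine Summable.of_nat_of_neg ?_ ?_
    · refine hnat.congr (fun n => ?_)
      rw [hu]; beta_reduce
      have h1 : |((n:ℤ):ℝ)| = (n:ℝ) := by
        rw [abs_of_nonneg] <;> simp
      have h2 : ((n:ℤ)).natAbs = n := Int.natAbs_natCast n
      rw [h1, h2]
    · refine hnat.congr (fun n => ?_)
      rw [hu]; beta_reduce
      have h2 : (-(n:ℤ)).natAbs = n := by simp
      rw [h2]; push_cast
      rw [abs_neg, abs_of_nonneg (by positivity : (0:ℝ) ≤ (n:ℝ))]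
  constructor
  · exact ((measurable_of_countable (fun k : ℤ => (k:ℝ))).comp hX).aestronglyMeasurable
  · rw [HasFiniteIntegral]
    have hmap : ∫⁻ ω, ‖((X ω : ℝ))‖₊ ∂(ℙ : Measure Ω)
        = ∫⁻ k, ‖((k : ℝ))‖₊ ∂(Measure.map X ℙ) := by
      rw [lintegral_map (measurable_of_countable _) hX]
    simp only [enorm_eq_nnnorm]; rw [hmap, lintegral_countable']
    have hle : ∀ k : ℤ, (‖((k : ℝ))‖₊ : ENNReal) * (Measure.map X ℙ) {k}
        ≤ ENNReal.ofReal (u k) := by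
      intro k
      rw [Measure.map_apply hX (measurableSet_singleton k)]
      have h1 : (‖((k : ℝ))‖₊ : ENNReal) = ENNReal.ofReal |(k:ℝ)| := by
        simp [Real.nnnorm_of_nonneg, ← Real.norm_eq_abs, ofReal_norm_eq_enorm, enorm_eq_nnnorm]
      have h2 : ℙ (X ⁻¹' {k}) = ENNReal.ofReal (p k) := by
        rw [hp, ENNReal.ofReal_toReal (measure_ne_top _ _)]
      rw [h1, h2, ← ENNReal.ofReal_mul (abs_nonneg _)]
      refine ENNReal.ofReal_le_ofReal ?_
      have := hbd k
      calc |(k:ℝ)| * p k ≤ (|(k:ℝ)| + 1) * (C * r ^ k.natAbs) := by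
            refine mul_le_mul (by linarith [abs_nonneg (k:ℝ)]) this (ENNReal.toReal_nonneg) (by positivity)
        _ = u k := rfl
    calc ∑' k : ℤ, (‖((k : ℝ))‖₊ : ENNReal) * (Measure.map X ℙ) {k}
        ≤ ∑' k : ℤ, ENNReal.ofReal (u k) := ENNReal.tsum_le_tsum hle
      _ = ENNReal.ofReal (∑' k, u k) := (ENNReal.ofReal_tsum_of_nonneg hu0 husum).symm
      _ < ⊤ := ENNReal.ofReal_lt_top

end IntegrableSec


lemma integrable_of_logconcave {Ω : Type*} [MeasureSpace Ω] [IsProbabilityMeasure (ℙ : Measure Ω)]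
    (X : Ω → ℤ) (hX : Measurable X)
    (hlc : IsLogConcavePMF (fun k => (ℙ (X ⁻¹' {k})).toReal)) :
    Integrable (fun ω => (X ω : ℝ)) ℙ := by
  set p : ℤ → ℝ := fun k => (ℙ (X ⁻¹' {k})).toReal with hp
  have hp0 : ∀ k, 0 ≤ p k := fun k => ENNReal.toReal_nonneg
  have hsum1 : ∀ s : Finset ℤ, ∑ k ∈ s, p k ≤ 1 := finset_sum_le_one X hX
  have hp1 : ∀ k, p k ≤ 1 := by
    intro k; have := hsum1 {k}; simpa using this
  have hratio := seq_ratio hp0 hlc.1 hlc.2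
  -- upper side
  obtain ⟨k₁, C, r, hC, hr0, hr1, hgeom⟩ := geom_tail p hp0 hlc.2 hratio hsum1
  obtain ⟨Cu, hCu, hup⟩ := nat_bound p hp1 k₁ C r hC hr0 hr1 hgeom
  -- lower side
  set pn : ℤ → ℝ := fun k => p (-k) with hpn
  have hpn0 : ∀ k, 0 ≤ pn k := fun k => hp0 _
  have hpn2 : ∀ a b c : ℤ, a ≤ b → b ≤ c → 0 < pn a → 0 < pn c → 0 < pn b :=
    fun a b c hab hbc ha hc => hlc.2 (-c) (-b) (-a) (by omega) (by omega) hc ha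
  have hpn1lc : ∀ k : ℤ, pn (k - 1) * pn (k + 1) ≤ pn k ^ 2 := by
    intro k
    have := hlc.1 (-k)
    rw [hpn]; beta_reduce
    rw [show -(k-1) = -k + 1 by ring, show -(k+1) = -k - 1 by ring, mul_comm]
    exact this
  have hpnsum1 : ∀ s : Finset ℤ, ∑ k ∈ s, pn k ≤ 1 := by
    intro s
    have hinj : Set.InjOn (fun k : ℤ => -k) s := fun x _ y _ h => neg_injective h
    calc ∑ k ∈ s, pn k = ∑ k ∈ s, p (-k) := rfl
      _ = ∑ k ∈ s.image (fun k => -k), p k := (Finset.sum_image hinj).symm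
      _ ≤ 1 := hsum1 _
  have hpnratio := seq_ratio hpn0 hpn1lc hpn2
  obtain ⟨k₂, C2, r2, hC2, hr20, hr21, hgeom2⟩ := geom_tail pn hpn0 hpn2 hpnratio hpnsum1
  obtain ⟨Cd, hCd, hdn⟩ := nat_bound pn (fun k => hp1 (-k)) k₂ C2 r2 hC2 hr20 hr21 hgeom2
  -- combine
  set C0 := max Cu Cd with hC0
  set r0 := max r r2 with hr0def
  have hr00 : 0 < r0 := lt_max_of_lt_left hr0
  have hr01 : r0 < 1 := max_lt hr1 hr21
  refine integrable_of_geom_bounds X hX C0 r0 (le_trans hCu (le_max_left _ _)) hr00 hr01 ?_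
  intro k
  have hb : p k ≤ C0 * r0 ^ k.natAbs := by
    rcases le_or_gt 0 k with hk | hk
    · have e : k = ((k.natAbs : ℕ) : ℤ) := by omega
      calc p k = p ((k.natAbs : ℕ) : ℤ) := by rw [← e]
        _ ≤ Cu * r ^ k.natAbs := hup k.natAbs
        _ ≤ C0 * r0 ^ k.natAbs := by
            refine mul_le_mul (le_max_left _ _)
              (pow_le_pow_left₀ (le_of_lt hr0) (le_max_left _ _) _) (by positivity) ?_
            exact le_trans hCu (le_max_left _ _)
    · have e : k = -((k.natAbs : ℕ) : ℤ) := by omega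
      calc p k = pn ((k.natAbs : ℕ) : ℤ) := by rw [hpn]; beta_reduce; rw [← e]
        _ ≤ Cd * r2 ^ k.natAbs := hdn k.natAbs
        _ ≤ C0 * r0 ^ k.natAbs := by
            refine mul_le_mul (le_max_right _ _)
              (pow_le_pow_left₀ (le_of_lt hr20) (le_max_right _ _) _) (by positivity) ?_
            exact le_trans hCu (le_max_left _ _)
  exact hb


section OneSided
variable {Ω : Type*} [MeasureSpace Ω] [IsProbabilityMeasure (ℙ : Measure Ω)]

lemma markov_toReal (g : Ω → ℝ) (hg : Integrable g ℙ) (hg0 : ∀ ω, 0 ≤ g ω)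
    (s : ℝ) (hs : 0 < s) :
    (ℙ {ω | s ≤ g ω}).toReal ≤ (∫ ω, g ω) / s := by
  have h := mul_meas_ge_le_integral_of_nonneg (ae_of_all _ hg0) hg s
  rw [le_div_iff₀ hs]
  simp only [measureReal_def] at h; linarith [h]

set_option maxHeartbeats 1600000 in
lemma one_sided (X : Ω → ℤ) (hX : Measurable X)
    (hlc : IsLogConcavePMF (fun k => (ℙ (X ⁻¹' {k})).toReal))
    (hint : Integrable (fun ω => (X ω : ℝ)) ℙ)
    (m D : ℝ) (hm : m = ∫ ω, (X ω : ℝ)) (hD : D = ∫ ω, |(X ω : ℝ) - m|) (hD0 : 0 < D)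
    (t : ℝ) (ht : 2 * (2*D+1) * Real.log 2 < t) :
    (ℙ {ω | m + t ≤ (X ω : ℝ)}).toReal ≤ Real.exp (-t / (2*(2*D+1))) := by
  have hlog2 : (0.6931471803 : ℝ) < Real.log 2 := Real.log_two_gt_d9
  have hlog3 : (1:ℝ) < Real.log 3 := by
    have h1 : Real.exp 1 < 3 := lt_trans Real.exp_one_lt_d9 (by norm_num)
    calc (1:ℝ) = Real.log (Real.exp 1) := (Real.log_exp 1).symm
      _ < Real.log 3 := Real.log_lt_log (Real.exp_pos 1) h1
  set c : ℝ := 2*D+1 with hc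
  have hc1 : 1 < c := by simp [hc]; linarith
  clear_value c
  have ht1 : 1 < t := by nlinarith [hlog2]
  -- integrable pieces
  have hXm : Integrable (fun ω => (X ω : ℝ) - m) ℙ := hint.sub (integrable_const m)
  have habs : Integrable (fun ω => |(X ω : ℝ) - m|) ℙ := hXm.abs
  have hpos : Integrable (fun ω => max ((X ω : ℝ) - m) 0) ℙ := hXm.pos_part
  have hneg : Integrable (fun ω => max (m - (X ω : ℝ)) 0) ℙ :=
    ((integrable_const m).sub hint).pos_part
  have hEXm : ∫ ω, ((X ω : ℝ) - m) = 0 := by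
    rw [integral_sub hint (integrable_const m), integral_const]
    simp [hm]
  have hEpos : ∫ ω, max ((X ω : ℝ) - m) 0 = D / 2 := by
    have hid : ∀ x : ℝ, max x 0 = (x + |x|) / 2 := by
      intro x; rcases le_or_gt 0 x with h | h
      · rw [max_eq_left h, abs_of_nonneg h]; ring
      · rw [max_eq_right (le_of_lt h), abs_of_neg h]; ring
    calc ∫ ω, max ((X ω : ℝ) - m) 0
        = ∫ ω, (((X ω : ℝ) - m) + |(X ω : ℝ) - m|) / 2 := by
          congr 1; funext ω; exact hid _
      _ = ((∫ ω, ((X ω : ℝ) - m)) + ∫ ω, |(X ω : ℝ) - m|) / 2 := by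
          rw [integral_div, integral_add hXm habs]
      _ = D / 2 := by rw [hEXm, hD]; ring
  have hEneg : ∫ ω, max (m - (X ω : ℝ)) 0 = D / 2 := by
    have hid : ∀ x : ℝ, max (-x) 0 = (-x + |x|) / 2 := by
      intro x; rcases le_or_gt 0 x with h | h
      · rw [max_eq_right (by linarith), abs_of_nonneg h]; ring
      · rw [max_eq_left (by linarith), abs_of_neg h]; ring
    calc ∫ ω, max (m - (X ω : ℝ)) 0
        = ∫ ω, (-((X ω : ℝ) - m) + |(X ω : ℝ) - m|) / 2 := by
          congr 1; funext ω
          have := hid ((X ω : ℝ) - m)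
          rw [show m - (X ω : ℝ) = -((X ω : ℝ) - m) by ring]
          exact this
      _ = ((∫ ω, -((X ω : ℝ) - m)) + ∫ ω, |(X ω : ℝ) - m|) / 2 := by
          have hXmneg : Integrable (fun ω => -((X ω : ℝ) - m)) ℙ :=
            ((integrable_const m).sub hint).congr (ae_of_all _ fun ω => by simp only [Pi.sub_apply]; ring)
          rw [integral_div, integral_add hXmneg habs]
      _ = D / 2 := by rw [integral_neg, hEXm, hD]; ring
  -- the tail sequence
  set p : ℤ → ℝ := fun k => (ℙ (X ⁻¹' {k})).toReal with hp
  set q : ℤ → ℝ := fun n => (ℙ (X ⁻¹' (Set.Ici n))).toReal with hq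
  have hq0 : ∀ n, 0 ≤ q n := fun n => ENNReal.toReal_nonneg
  have hqmono : ∀ i j : ℤ, i ≤ j → q j ≤ q i := by
    intro i j hij
    exact ENNReal.toReal_mono (measure_ne_top _ _)
      (measure_mono (Set.preimage_mono (Set.Ici_subset_Ici.2 hij)))
  have hqlc : ∀ n : ℤ, q n * q (n + 2) ≤ q (n + 1) ^ 2 := by
    refine tail_logconcave p q (fun k => ENNReal.toReal_nonneg)
      (seq_ratio (fun k => ENNReal.toReal_nonneg) hlc.1 hlc.2)
      (summable_tail X hX) (qtail_eq X hX)
  -- anchor points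
  set a : ℤ := ⌊m - D⌋ + 1 with ha
  set b : ℤ := ⌈m + 3*D⌉ with hb
  have har : (a:ℝ) ≤ m - D + 1 := by
    rw [ha]; push_cast; linarith [Int.floor_le (m - D)]
  have har2 : m - D < (a:ℝ) := by
    rw [ha]; push_cast; linarith [Int.lt_floor_add_one (m - D)]
  have hbr : m + 3*D ≤ (b:ℝ) := Int.le_ceil _
  have hbr2 : (b:ℝ) < m + 3*D + 1 := by
    rw [hb]; linarith [Int.ceil_lt_add_one (m + 3*D)]
  clear_value a b
  -- Markov bounds
  have hqb : q b ≤ 1/6 := by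
    have hsub : X ⁻¹' (Set.Ici b) ⊆ {ω | 3*D ≤ max ((X ω : ℝ) - m) 0} := by
      intro ω hω
      simp only [Set.mem_preimage, Set.mem_Ici] at hω
      have : (b:ℝ) ≤ (X ω : ℝ) := by exact_mod_cast hω
      simp only [Set.mem_setOf_eq, le_max_iff]
      left; linarith
    have h1 : q b ≤ (ℙ {ω | 3*D ≤ max ((X ω : ℝ) - m) 0}).toReal :=
      ENNReal.toReal_mono (measure_ne_top _ _) (measure_mono hsub)
    have h2 := markov_toReal _ hpos (fun ω => le_max_right _ _) (3*D) (by linarith)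
    rw [hEpos] at h2
    calc q b ≤ (ℙ {ω | 3*D ≤ max ((X ω : ℝ) - m) 0}).toReal := h1
      _ ≤ (D/2) / (3*D) := h2
      _ = 1/6 := by field_simp; ring
  have hqa : 1/2 ≤ q a := by
    have hcompl : (X ⁻¹' (Set.Ici a))ᶜ ⊆ {ω | D ≤ max (m - (X ω : ℝ)) 0} := by
      intro ω hω
      simp only [Set.mem_compl_iff, Set.mem_preimage, Set.mem_Ici, not_le] at hω
      have h1 : X ω ≤ a - 1 := by omega
      have h2 : ((a:ℝ) - 1) ≤ m - D := by linarith [har]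
      have h3 : (X ω : ℝ) ≤ (a:ℝ) - 1 := by exact_mod_cast h1
      simp only [Set.mem_setOf_eq, le_max_iff]
      left; linarith
    have h1 : (ℙ ((X ⁻¹' (Set.Ici a))ᶜ)).toReal ≤ 1/2 := by
      have h2 := markov_toReal _ hneg (fun ω => le_max_right _ _) D hD0
      rw [hEneg] at h2
      calc (ℙ ((X ⁻¹' (Set.Ici a))ᶜ)).toReal
          ≤ (ℙ {ω | D ≤ max (m - (X ω : ℝ)) 0}).toReal :=
            ENNReal.toReal_mono (measure_ne_top _ _) (measure_mono hcompl)
        _ ≤ (D/2) / D := h2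
        _ = 1/2 := by
            have hDne : D ≠ 0 := ne_of_gt hD0
            field_simp
    have hmeas : MeasurableSet (X ⁻¹' (Set.Ici a)) := hX trivial
    have := prob_compl_eq_one_sub (μ := (ℙ : Measure Ω)) hmeas
    have htot : q a = 1 - (ℙ ((X ⁻¹' (Set.Ici a))ᶜ)).toReal := by
      rw [hq]; beta_reduce
      rw [this, ENNReal.toReal_sub_of_le (prob_le_one) (by norm_num)]
      norm_num
    rw [htot]; linarith
  have hqdef : ∀ z : ℤ, (ℙ (X ⁻¹' (Set.Ici z))).toReal = q z := fun z => rfl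
  clear_value p q
  -- a < b
  have hab : a < b := by
    by_contra hab
    push_neg at hab
    have := hqmono b a hab
    linarith
  set h : ℕ := (b - a).toNat with hh
  clear_value h
  have hh1 : 1 ≤ h := by omega
  have hhz : ((h:ℕ):ℤ) = b - a := by omega
  have hhr : (h:ℝ) = (b:ℝ) - (a:ℝ) := by exact_mod_cast hhz
  have hhub : (h:ℝ) < 4*D + 1 := by rw [hhr]; linarith
  -- target level
  set n : ℤ := ⌈m + t⌉ with hn
  have hset : {ω | m + t ≤ (X ω : ℝ)} = X ⁻¹' (Set.Ici n) := by
    ext ω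
    simp only [Set.mem_setOf_eq, Set.mem_preimage, Set.mem_Ici, hn]
    exact Iff.symm Int.ceil_le
  have hnr : m + t ≤ (n:ℝ) := Int.le_ceil _
  have hna : a < n := by
    have : (a:ℝ) < (n:ℝ) := by linarith
    exact_mod_cast this
  clear_value n
  set k : ℕ := (n - a).toNat with hk
  clear_value k
  have hkz : ((k:ℕ):ℤ) = n - a := by omega
  have hkr : (k:ℝ) = (n:ℝ) - (a:ℝ) := by exact_mod_cast hkz
  have hklb : t + D - 1 ≤ (k:ℝ) := by rw [hkr]; linarith
  rw [hset]
  have hqn : (ℙ (X ⁻¹' (Set.Ici n))).toReal = q n := hqdef n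
  rw [hqn]
  rcases le_or_gt h k with hhk | hkh
  · -- chord case
    have hchord := chord q hq0 (fun n => hqmono n (n+1) (by omega)) hqlc a h k hhk
    have hak : a + (k:ℤ) = n := by rw [hk]; omega
    have hah : a + (h:ℤ) = b := by rw [hh]; omega
    rw [hak, hah] at hchord
    have hqnn : 0 ≤ q n := hq0 n
    have step1 : (1/2:ℝ)^(k-h) * q n ^ h ≤ (1/6:ℝ)^k := by
      calc (1/2:ℝ)^(k-h) * q n ^ h ≤ q a ^(k-h) * q n ^ h := by
            refine mul_le_mul_of_nonneg_right (pow_le_pow_left₀ (by norm_num) hqa _)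
              (pow_nonneg hqnn _)
        _ ≤ q b ^ k := hchord
        _ ≤ (1/6:ℝ)^k := pow_le_pow_left₀ (hq0 b) hqb k
    have step2 : q n ^ h ≤ (1/6:ℝ)^k * 2^(k-h) := by
      have h2 : (0:ℝ) < (1/2:ℝ)^(k-h) := by positivity
      rw [← le_div_iff₀' h2] at step1
      calc q n ^ h ≤ (1/6:ℝ)^k / (1/2:ℝ)^(k-h) := step1
        _ = (1/6:ℝ)^k * 2^(k-h) := by
            rw [div_eq_mul_inv, ← inv_pow]
            norm_num
    have step3 : (1/6:ℝ)^k * 2^(k-h) ≤ (Real.exp (-t / (2*c)))^h := by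
      have e1 : (1/6:ℝ)^k = Real.exp ((k:ℝ) * Real.log (1/6)) := by
        rw [Real.exp_nat_mul, Real.exp_log (by norm_num : (0:ℝ) < 1/6)]
      have e2 : (2:ℝ)^(k-h) = Real.exp (((k-h:ℕ):ℝ) * Real.log 2) := by
        rw [Real.exp_nat_mul, Real.exp_log (by norm_num : (0:ℝ) < 2)]
      have e3 : (Real.exp (-t / (2*c)))^h = Real.exp ((h:ℝ) * (-t / (2*c))) := by
        rw [Real.exp_nat_mul]
      rw [e1, e2, e3, ← Real.exp_add, Real.exp_le_exp]
      have hlog16 : Real.log (1/6) = -(Real.log 2 + Real.log 3) := by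
        rw [one_div, Real.log_inv, show (6:ℝ) = 2*3 by norm_num,
          Real.log_mul (by norm_num) (by norm_num)]
      have hcast : ((k-h:ℕ):ℝ) = (k:ℝ) - (h:ℝ) := by
        rw [Nat.cast_sub hhk]
      rw [hlog16, hcast]
      -- goal: k * (-(log2+log3)) + (k - h)*log2 ≤ h * (-t/(2c))
      have hc0 : (0:ℝ) < c := by linarith
      have h2cpos : (0:ℝ) < 2*c := by linarith
      have h2c : (h:ℝ) ≤ 2*c := by rw [hc]; linarith
      have hkt : t - 1 ≤ (k:ℝ) := by linarith
      have hkpos : (0:ℝ) ≤ (k:ℝ) := Nat.cast_nonneg k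
      have hhpos : (0:ℝ) < (h:ℝ) := by exact_mod_cast hh1
      have A : (t-1)*(h:ℝ) ≤ (k:ℝ)*(2*c) := by nlinarith
      have B : (k:ℝ)*(2*c) ≤ (k:ℝ)*Real.log 3*(2*c) := by
        have h1 : (k:ℝ) ≤ (k:ℝ)*Real.log 3 := le_mul_of_one_le_right hkpos (le_of_lt hlog3)
        exact mul_le_mul_of_nonneg_right h1 (le_of_lt h2cpos)
      have hlc2 : (1:ℝ) < 2*c*Real.log 2 := by
        calc (1:ℝ) < 2*0.6931471803 := by norm_num
          _ ≤ 2*c*Real.log 2 := by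
              have := mul_le_mul (by linarith : (2:ℝ) ≤ 2*c) (le_of_lt hlog2)
                (by norm_num) (by linarith)
              linarith [this]
      have C : (h:ℝ) ≤ (h:ℝ)*Real.log 2*(2*c) := by
        have h1 : (h:ℝ) ≤ (h:ℝ)*(Real.log 2*(2*c)) :=
          le_mul_of_one_le_right (le_of_lt hhpos) (by nlinarith [hlc2])
        linarith [h1, show (h:ℝ)*(Real.log 2*(2*c)) = (h:ℝ)*Real.log 2*(2*c) from by ring]
      have hfin : t*(h:ℝ)/(2*c) ≤ (k:ℝ)*Real.log 3 + (h:ℝ)*Real.log 2 := by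
        rw [div_le_iff₀ h2cpos]
        have expand : ((k:ℝ)*Real.log 3 + (h:ℝ)*Real.log 2)*(2*c)
            = (k:ℝ)*Real.log 3*(2*c) + (h:ℝ)*Real.log 2*(2*c) := by ring
        linarith [A, B, C, expand]
      have e : (h:ℝ) * (-t/(2*c)) = -(t*(h:ℝ)/(2*c)) := by ring
      rw [e]
      linarith [hfin]
    have step4 : q n ^ h ≤ (Real.exp (-t / (2*c)))^h := le_trans step2 step3
    exact le_of_pow_le_pow_left₀ (by omega) (le_of_lt (Real.exp_pos _)) step4
  · -- small case: Markov
    have htub : t < 3*D + 1 := by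
      have : (k:ℝ) ≤ (h:ℝ) - 1 := by exact_mod_cast Nat.le_sub_one_of_lt hkh
      linarith
    have hsub : X ⁻¹' (Set.Ici n) ⊆ {ω | t ≤ max ((X ω : ℝ) - m) 0} := by
      intro ω hω
      simp only [Set.mem_preimage, Set.mem_Ici] at hω
      have : (n:ℝ) ≤ (X ω : ℝ) := by exact_mod_cast hω
      simp only [Set.mem_setOf_eq, le_max_iff]
      left; linarith
    have h1 : q n ≤ (D/2) / t := by
      have h2 := markov_toReal _ hpos (fun ω => le_max_right _ _) t (by linarith)
      rw [hEpos] at h2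
      calc q n = (ℙ (X ⁻¹' (Set.Ici n))).toReal := (hqdef n).symm
        _ ≤ (ℙ {ω | t ≤ max ((X ω : ℝ) - m) 0}).toReal :=
            ENNReal.toReal_mono (measure_ne_top _ _) (measure_mono hsub)
        _ ≤ (D/2) / t := h2
    have h2 : (D/2) / t ≤ 1 / (8 * Real.log 2) := by
      have ht2 : 2 * (2*D+1) * Real.log 2 < t := by rw [← hc]; exact ht
      have hlogpos : (0:ℝ) < Real.log 2 := by linarith
      rw [div_le_div_iff₀ (by linarith) (by positivity)]
      nlinarith
    have h3 : (1:ℝ) / (8 * Real.log 2) ≤ Real.exp (-1) := by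
      rw [Real.exp_neg]
      rw [div_le_iff₀ (by nlinarith : (0:ℝ) < 8 * Real.log 2)]
      rw [inv_mul_eq_div, le_div_iff₀ (Real.exp_pos 1)]
      nlinarith [Real.exp_one_lt_d9]
    have h4 : Real.exp (-1) ≤ Real.exp (-t / (2*c)) := by
      rw [Real.exp_le_exp]
      rw [neg_div, neg_le_neg_iff, div_le_one (by linarith : (0:ℝ) < 2*c)]
      rw [hc]; linarith
    linarith
end OneSided


/-- If `X` is a log-concave integer-valued random variable, then for all `t ≥ 0`,
`P(|X - E[X]| ≥ t) ≤ 2·exp(−t / (2·(2·E[|X − E[X]|] + 1)))`. -/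
theorem concentration_bound
    {Ω : Type*} [MeasureSpace Ω] [IsProbabilityMeasure (ℙ : Measure Ω)]
    (X : Ω → ℤ) (hX : Measurable X)
    (hlc : IsLogConcavePMF (fun k => (ℙ (X ⁻¹' {k})).toReal))
    (m : ℝ) (hm : m = ∫ ω, (X ω : ℝ))
    (t : ℝ) (ht : 0 ≤ t) :
    (ℙ {ω | t ≤ |(X ω : ℝ) - m|}).toReal ≤
      2 * Real.exp (-t / (2 * (2 * (∫ ω, |(X ω : ℝ) - m|) + 1))) := by
  have hint : Integrable (fun ω => (X ω : ℝ)) ℙ := integrable_of_logconcave X hX hlc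
  set D : ℝ := ∫ ω, |(X ω : ℝ) - m| with hD
  have hD0 : 0 ≤ D := integral_nonneg (fun ω => abs_nonneg _)
  have hc0 : (0:ℝ) < 2 * (2*D+1) := by linarith
  have hlog2pos : (0:ℝ) < Real.log 2 := Real.log_pos (by norm_num)
  rcases le_or_gt t (2 * (2*D+1) * Real.log 2) with hsm | hlg
  · -- trivial case
    have h1 : (ℙ {ω | t ≤ |(X ω : ℝ) - m|}).toReal ≤ 1 :=
      ENNReal.toReal_le_of_le_ofReal (by norm_num) (by simpa using prob_le_one)
    have h2 : (1:ℝ) ≤ 2 * Real.exp (-t / (2 * (2*D+1))) := by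
      have hexp : Real.exp (-Real.log 2) ≤ Real.exp (-t / (2 * (2*D+1))) := by
        rw [Real.exp_le_exp, neg_le, ← neg_div, neg_neg]
        rw [div_le_iff₀ hc0]
        linarith
      rw [Real.exp_neg, Real.exp_log (by norm_num : (0:ℝ) < 2)] at hexp
      linarith
    linarith
  · have ht0 : 0 < t := lt_of_le_of_lt (by positivity) hlg
    rcases eq_or_lt_of_le hD0 with hD0' | hDpos
    · -- D = 0 : X = m a.e.
      have habs : Integrable (fun ω => |(X ω : ℝ) - m|) ℙ := (hint.sub (integrable_const m)).abs
      have hae0 : (fun ω => |(X ω : ℝ) - m|) =ᵐ[(ℙ : Measure Ω)] 0 :=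
        (integral_eq_zero_iff_of_nonneg (fun ω => abs_nonneg _) habs).1 hD0'.symm
      have hae : ∀ᵐ ω ∂(ℙ : Measure Ω), |(X ω : ℝ) - m| = 0 := by
        filter_upwards [hae0] with ω hω
        simpa using hω
      have hnull : ℙ {ω | t ≤ |(X ω : ℝ) - m|} = 0 := by
        refine measure_mono_null ?_ (ae_iff.1 hae)
        intro ω hω
        simp only [Set.mem_setOf_eq] at hω ⊢
        intro h0
        rw [h0] at hω; linarith
      rw [hnull]
      simp
      positivity
    · -- main case: union bound over the two tails
      set U : Set Ω := {ω | m + t ≤ (X ω : ℝ)} with hU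
      set X' : Ω → ℤ := fun ω => -(X ω) with hX'def
      set L : Set Ω := {ω | (-m) + t ≤ ((X' ω : ℤ) : ℝ)} with hL
      have hsplit : {ω | t ≤ |(X ω : ℝ) - m|} ⊆ U ∪ L := by
        intro ω hω
        simp only [Set.mem_setOf_eq] at hω
        rcases le_abs.1 hω with h | h
        · left; simp only [hU, Set.mem_setOf_eq]; linarith
        · right; simp only [hL, hX'def, Set.mem_setOf_eq]; push_cast; linarith
      have hXm' : Measurable X' := hX.neg
      have hlc' : IsLogConcavePMF (fun k => (ℙ (X' ⁻¹' {k})).toReal) := by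
        have hpre : ∀ k : ℤ, X' ⁻¹' {k} = X ⁻¹' {-k} := by
          intro k; ext ω
          simp only [hX'def, Set.mem_preimage, Set.mem_singleton_iff]
          omega
        constructor
        · intro k
          have h1 := hlc.1 (-k)
          simp only [hpre]
          rw [show -(k-1) = -k+1 by ring, show -(k+1) = -k-1 by ring]
          rw [mul_comm]
          exact h1
        · intro a b c hab hbc ha hb
          simp only [hpre] at ha hb ⊢
          exact hlc.2 (-c) (-b) (-a) (by omega) (by omega) hb ha
      have hint' : Integrable (fun ω => ((X' ω : ℤ) : ℝ)) ℙ := by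
        refine hint.neg.congr (ae_of_all _ fun ω => ?_)
        simp [hX'def]
      have hm' : -m = ∫ ω, ((X' ω : ℤ) : ℝ) := by
        have : ∫ ω, ((X' ω : ℤ) : ℝ) = ∫ ω, -((X ω : ℝ)) := by
          congr 1; funext ω; simp [hX'def]
        rw [this, integral_neg, hm]
      have hD' : D = ∫ ω, |((X' ω : ℤ) : ℝ) - (-m)| := by
        rw [hD]; congr 1; funext ω
        simp only [hX'def]
        push_cast
        rw [show -(X ω : ℝ) - -m = -((X ω : ℝ) - m) by ring, abs_neg]
      have hup := one_sided X hX hlc hint m D hm hD hDpos t hlg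
      have hlo := one_sided X' hXm' hlc' hint' (-m) D hm' hD' hDpos t hlg
      have hunion : (ℙ {ω | t ≤ |(X ω : ℝ) - m|}).toReal ≤ (ℙ U).toReal + (ℙ L).toReal := by
        calc (ℙ {ω | t ≤ |(X ω : ℝ) - m|}).toReal
            ≤ (ℙ (U ∪ L)).toReal :=
              ENNReal.toReal_mono (measure_ne_top _ _) (measure_mono hsplit)
          _ ≤ (ℙ U + ℙ L).toReal := by
              refine ENNReal.toReal_mono ?_ (measure_union_le U L)
              exact ENNReal.add_ne_top.2 ⟨measure_ne_top _ _, measure_ne_top _ _⟩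
          _ = (ℙ U).toReal + (ℙ L).toReal :=
              ENNReal.toReal_add (measure_ne_top _ _) (measure_ne_top _ _)
      calc (ℙ {ω | t ≤ |(X ω : ℝ) - m|}).toReal
          ≤ (ℙ U).toReal + (ℙ L).toReal := hunion
        _ ≤ Real.exp (-t / (2 * (2*D+1))) + Real.exp (-t / (2 * (2*D+1))) := by
            refine add_le_add ?_ ?_
            · exact hup
            · exact hlo
        _ = 2 * Real.exp (-t / (2 * (2*D+1))) := by ring
end

section
/- If X is a log-concave integer-valued random variable with probability mass function p and with Var(X) ≤ 1, then E[log²(p(X))] ≤ 39. -/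
open Real Filter


lemma aux_t_exp (t : ℝ) (ht : 0 ≤ t) : t * Real.exp (-t) ≤ Real.exp (-1) := by
  have h := Real.add_one_le_exp (t - 1)
  calc t * Real.exp (-t) ≤ Real.exp (t - 1) * Real.exp (-t) := by
        apply mul_le_mul_of_nonneg_right _ (Real.exp_nonneg _); linarith
    _ = Real.exp (-1) := by rw [← Real.exp_add]; ring_nf

lemma aux_y2 (y : ℝ) (hy : 0 ≤ y) : y ^ 2 * Real.exp (-y) ≤ 4 * Real.exp (-2) := by
  have ht : 0 ≤ y / 2 := by linarith
  have h := aux_t_exp (y / 2) ht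
  have h2 : (y / 2 * Real.exp (-(y / 2))) ^ 2 ≤ Real.exp (-1) ^ 2 := by
    apply pow_le_pow_left₀ (by positivity) h
  have e1 : (y / 2 * Real.exp (-(y / 2))) ^ 2 = y ^ 2 / 4 * Real.exp (-y) := by
    rw [mul_pow, sq (Real.exp _), ← Real.exp_add]; ring_nf
  have e2 : Real.exp (-1) ^ 2 = Real.exp (-2) := by
    rw [sq, ← Real.exp_add]; norm_num
  rw [e1, e2] at h2
  linarith
lemma aux_mono (Y y : ℝ) (hY : 2 ≤ Y) (hy : Y ≤ y) :
    y ^ 2 * Real.exp (-y) ≤ Y ^ 2 * Real.exp (-Y) := by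
  set t := y - Y with ht
  have ht0 : 0 ≤ t := by linarith
  have h1 : 1 + t / 2 ≤ Real.exp (t / 2) := by
    have := Real.add_one_le_exp (t / 2); linarith
  have h2 : (1 + t / 2) ^ 2 ≤ Real.exp t := by
    calc (1 + t / 2) ^ 2 ≤ Real.exp (t / 2) ^ 2 := by
          apply pow_le_pow_left₀ (by linarith) h1
      _ = Real.exp t := by rw [sq, ← Real.exp_add]; ring_nf
  have h3 : y ^ 2 ≤ Y ^ 2 * Real.exp t := by
    have hyY : y ≤ Y * (1 + t / 2) := by nlinarith
    have : y ^ 2 ≤ (Y * (1 + t / 2)) ^ 2 := by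
      apply pow_le_pow_left₀ (by linarith) hyY
    calc y ^ 2 ≤ Y ^ 2 * (1 + t / 2) ^ 2 := by rw [mul_pow] at this; exact this
      _ ≤ Y ^ 2 * Real.exp t := by
          apply mul_le_mul_of_nonneg_left h2 (by positivity)
  calc y ^ 2 * Real.exp (-y) ≤ Y ^ 2 * Real.exp t * Real.exp (-y) := by
        apply mul_le_mul_of_nonneg_right h3 (Real.exp_nonneg _)
    _ = Y ^ 2 * Real.exp (-Y) := by rw [mul_assoc, ← Real.exp_add, ht]; ring_nf

lemma term_le_global {x : ℝ} (hx0 : 0 ≤ x) (hx1 : x ≤ 1) :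
    Real.log x ^ 2 * x ≤ 4 * Real.exp (-2) := by
  rcases eq_or_lt_of_le hx0 with h | h
  · rw [← h, mul_zero]; positivity
  · set y := -Real.log x with hy
    have hy0 : 0 ≤ y := by
      have := Real.log_nonpos hx0 hx1; simp [hy]; linarith
    have hxe : x = Real.exp (-y) := by rw [hy, neg_neg, Real.exp_log h]
    have : Real.log x ^ 2 = y ^ 2 := by rw [hy]; ring
    rw [this, hxe]
    exact aux_y2 y hy0

lemma term_le_of_le {x u : ℝ} (hx : 0 ≤ x) (hxu : x ≤ u) (hu0 : 0 < u)
    (hu : u ≤ Real.exp (-2)) :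
    Real.log x ^ 2 * x ≤ Real.log u ^ 2 * u := by
  rcases eq_or_lt_of_le hx with h | h
  · rw [← h, mul_zero]; positivity
  · set y := -Real.log x with hy
    set Y := -Real.log u with hY
    have hY2 : 2 ≤ Y := by
      have := Real.log_le_log hu0 hu
      rw [Real.log_exp] at this
      simp [hY]; linarith
    have hyY : Y ≤ y := by
      have := Real.log_le_log h hxu
      simp [hy, hY]; linarith
    have hxe : x = Real.exp (-y) := by rw [hy, neg_neg, Real.exp_log h]
    have hue : u = Real.exp (-Y) := by rw [hY, neg_neg, Real.exp_log hu0]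
    have e1 : Real.log x ^ 2 = y ^ 2 := by rw [hy]; ring
    have e2 : Real.log u ^ 2 = Y ^ 2 := by rw [hY]; ring
    rw [e1, e2, hxe, hue]
    exact aux_mono Y y hY2 hyY

lemma log_le_quarter {a : ℝ} (ha : 1 ≤ a) :
    Real.log a ≤ 4 * Real.sqrt (Real.sqrt a) * Real.exp (-1) := by
  have ha0 : (0:ℝ) < a := by linarith
  have hs0 : 0 < Real.sqrt (Real.sqrt a) := Real.sqrt_pos.2 (Real.sqrt_pos.2 ha0)
  -- log t ≤ t * exp (-1) for t > 0
  have key : ∀ t : ℝ, 0 < t → Real.log t ≤ t * Real.exp (-1) := by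
    intro t ht
    have h1 : Real.log (t * Real.exp (-1)) ≤ t * Real.exp (-1) - 1 :=
      Real.log_le_sub_one_of_pos (by positivity)
    rw [Real.log_mul (ne_of_gt ht) (ne_of_gt (Real.exp_pos _)), Real.log_exp] at h1
    linarith
  have e1 : Real.log a = 4 * Real.log (Real.sqrt (Real.sqrt a)) := by
    rw [Real.log_sqrt (Real.sqrt_nonneg a), Real.log_sqrt ha0.le]; ring
  rw [e1]
  have := key _ hs0
  linarith

lemma sqrt_div_le {a : ℝ} (ha : 3 ≤ a) :
    Real.sqrt a / a ^ 2 ≤ 2 * (1 / Real.sqrt (a - 1) - 1 / Real.sqrt a) := by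
  set s := Real.sqrt a with hs
  set s' := Real.sqrt (a - 1) with hs'
  have hs2 : s ^ 2 = a := Real.sq_sqrt (by linarith)
  have hs'2 : s' ^ 2 = a - 1 := Real.sq_sqrt (by linarith)
  have hs0 : 0 < s := Real.sqrt_pos.2 (by linarith)
  have hs'0 : 0 < s' := Real.sqrt_pos.2 (by linarith)
  have hss : s' ≤ s := Real.sqrt_le_sqrt (by linarith)
  have hdiff : (s - s') * (s + s') = 1 := by nlinarith
  have hsub : 0 ≤ s - s' := by linarith
  have h7 : 2 * (s - s') * s ^ 4 * (s + s') = 2 * s ^ 4 := by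
    linear_combination (2 * s ^ 4) * hdiff
  have h9 : 2 * s ^ 4 ≤ 2 * (s - s') * s ^ 4 * (2 * s) := by
    nlinarith [mul_nonneg (mul_nonneg hsub (pow_nonneg hs0.le 4))
      (sub_nonneg.2 (by linarith : s + s' ≤ 2 * s))]
  have ha4 : a ^ 2 = s ^ 4 := by rw [← hs2]; ring
  have hkey : s ^ 2 * s' ≤ 2 * (s - s') * s ^ 4 := by
    nlinarith [h9, hs0, mul_le_mul_of_nonneg_left hss
      (by positivity : (0:ℝ) ≤ s ^ 3), mul_pos hs0 hs'0]
  rw [div_sub_div _ _ (ne_of_gt hs'0) (ne_of_gt hs0), mul_div_assoc']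
  rw [div_le_div_iff₀ (by positivity) (by positivity)]
  -- goal : s * (s' * s) ≤ 2 * (1 * s - s' * 1) * a ^ 2
  rw [ha4]
  nlinarith [hkey]

lemma tail_bound {x a : ℝ} (ha : 3 ≤ a) (hx0 : 0 ≤ x) (hx : x ≤ 1 / a ^ 2) :
    Real.log x ^ 2 * x ≤
      128 * Real.exp (-2) * (1 / Real.sqrt (a - 1) - 1 / Real.sqrt a) := by
  have ha0 : (0:ℝ) < a := by linarith
  have hu0 : (0:ℝ) < 1 / a ^ 2 := by positivity
  have hexp2 : Real.exp 2 ≤ a ^ 2 := by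
    have h1 : Real.exp 2 = Real.exp 1 * Real.exp 1 := by rw [← Real.exp_add]; norm_num
    have h2 : Real.exp 1 < 2.7182818286 := Real.exp_one_lt_d9
    nlinarith [Real.exp_pos 1]
  have hue : 1 / a ^ 2 ≤ Real.exp (-2) := by
    rw [Real.exp_neg]
    rw [one_div, inv_le_inv₀ (by positivity) (Real.exp_pos 2)]
    exact hexp2
  have step1 : Real.log x ^ 2 * x ≤ Real.log (1 / a ^ 2) ^ 2 * (1 / a ^ 2) :=
    term_le_of_le hx0 hx hu0 hue
  have hlog : Real.log (1 / a ^ 2) ^ 2 = 4 * Real.log a ^ 2 := by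
    rw [Real.log_div one_ne_zero (by positivity), Real.log_one, Real.log_pow]
    push_cast; ring
  have hla : 0 ≤ Real.log a := Real.log_nonneg (by linarith)
  have hsq : Real.log a ^ 2 ≤ 16 * Real.sqrt a * Real.exp (-2) := by
    have h3 := log_le_quarter (by linarith : (1:ℝ) ≤ a)
    have h4 : Real.log a ^ 2 ≤ (4 * Real.sqrt (Real.sqrt a) * Real.exp (-1)) ^ 2 := by
      apply pow_le_pow_left₀ hla h3
    have he : Real.exp (-1) * Real.exp (-1) = Real.exp (-2) := by
      rw [← Real.exp_add]; norm_num
    have h5 : (4 * Real.sqrt (Real.sqrt a) * Real.exp (-1)) ^ 2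
        = 16 * Real.sqrt a * Real.exp (-2) := by
      rw [mul_pow, mul_pow, Real.sq_sqrt (Real.sqrt_nonneg a),
        pow_two (Real.exp (-1)), he]
      norm_num
    linarith
  have hdd := sqrt_div_le ha
  have hsa : 0 ≤ Real.sqrt a := Real.sqrt_nonneg a
  calc Real.log x ^ 2 * x ≤ Real.log (1 / a ^ 2) ^ 2 * (1 / a ^ 2) := step1
    _ = Real.log (1 / a ^ 2) ^ 2 / a ^ 2 := by ring
    _ ≤ 64 * Real.exp (-2) * (Real.sqrt a / a ^ 2) := by
        rw [hlog]
        rw [div_le_iff₀ (by positivity)]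
        have : 64 * Real.exp (-2) * (Real.sqrt a / a ^ 2) * a ^ 2
            = 4 * (16 * Real.sqrt a * Real.exp (-2)) := by
          field_simp; ring
        rw [this]
        have := hsq
        nlinarith
    _ ≤ 64 * Real.exp (-2) * (2 * (1 / Real.sqrt (a - 1) - 1 / Real.sqrt a)) := by
        apply mul_le_mul_of_nonneg_left hdd (by positivity)
    _ = 128 * Real.exp (-2) * (1 / Real.sqrt (a - 1) - 1 / Real.sqrt a) := by ring



lemma tail_exists_right (q : ℤ → ℝ) (hnn : ∀ k, 0 ≤ q k) (hq1 : ∀ k, q k ≤ 1)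
    (hint : ∀ a b c : ℤ, a ≤ b → b ≤ c → 0 < q a → 0 < q c → 0 < q b)
    (hlcq : ∀ k, q (k - 1) * q (k + 1) ≤ q k ^ 2)
    (hsum : ∀ F : Finset ℤ, ∑ k ∈ F, q k ≤ 1)
    (k0 : ℤ) (hk0 : 0 < q k0) :
    ∃ (k1 : ℤ) (r : ℝ), 0 ≤ r ∧ r < 1 ∧ ∀ i : ℕ, q (k1 + i) ≤ r ^ i := by
  by_cases hc : ∃ k, k0 ≤ k ∧ q (k + 1) < q k
  · obtain ⟨k1, hk1ge, hlt⟩ := hc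
    have hk1pos : 0 < q k1 := lt_of_le_of_lt (hnn _) hlt
    set r := q (k1 + 1) / q k1 with hr
    have hr0 : 0 ≤ r := div_nonneg (hnn _) (hnn _)
    have hr1 : r < 1 := (div_lt_one hk1pos).2 hlt
    have Q : ∀ i : ℕ, q (k1 + i + 1) * q k1 ≤ q (k1 + i) * q (k1 + 1) := by
      intro i
      induction i with
      | zero => simp [mul_comm]
      | succ i ih =>
        have e2 : k1 + ((i : ℤ) + 1) + 1 = k1 + i + 1 + 1 := by ring
        have e3 : k1 + ((i : ℤ) + 1) = k1 + i + 1 := by ring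
        push_cast
        rw [e2, e3]
        by_cases hz : q (k1 + i + 1) = 0
        · have hz2 : q (k1 + i + 1 + 1) = 0 := by
            by_contra h'
            have hpos : 0 < q (k1 + i + 1 + 1) := lt_of_le_of_ne (hnn _) (Ne.symm h')
            have hb := hint k1 (k1 + i + 1) (k1 + i + 1 + 1)
              (by omega) (by omega) hk1pos hpos
            rw [hz] at hb; exact lt_irrefl 0 hb
          rw [hz2, zero_mul]
          exact mul_nonneg (hnn _) (hnn _)
        · have hpos1 : 0 < q (k1 + i + 1) := lt_of_le_of_ne (hnn _) (Ne.symm hz)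
          have hposi : 0 < q (k1 + i) :=
            hint k1 (k1 + i) (k1 + i + 1) (by omega) (by omega) hk1pos hpos1
          have hlc' := hlcq (k1 + i + 1)
          have e1 : k1 + (i : ℤ) + 1 - 1 = k1 + i := by ring
          rw [e1] at hlc'
          have h1 : q (k1 + i) * q (k1 + i + 1 + 1) * q k1 ≤ q (k1 + i + 1) ^ 2 * q k1 :=
            mul_le_mul_of_nonneg_right hlc' (hnn _)
          have h3 : q (k1 + i + 1) * (q (k1 + i + 1) * q k1)
              ≤ q (k1 + i + 1) * (q (k1 + i) * q (k1 + 1)) :=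
            mul_le_mul_of_nonneg_left ih (hnn _)
          exact le_of_mul_le_mul_right (by nlinarith [h1, h3]) hposi
    have R : ∀ i : ℕ, q (k1 + i) ≤ q k1 * r ^ i := by
      intro i
      induction i with
      | zero => simp
      | succ i ih =>
        have h6 : q (k1 + i + 1) ≤ q (k1 + i) * q (k1 + 1) / q k1 :=
          (le_div_iff₀ hk1pos).2 (Q i)
        rw [mul_div_assoc] at h6
        have e3 : k1 + ((i : ℕ) + 1 : ℕ) = k1 + i + 1 := by push_cast; ring
        calc q (k1 + ((i : ℕ) + 1 : ℕ)) = q (k1 + i + 1) := by rw [e3]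
          _ ≤ q (k1 + i) * r := h6
          _ ≤ q k1 * r ^ i * r := mul_le_mul_of_nonneg_right ih hr0
          _ = q k1 * r ^ (i + 1) := by ring
    refine ⟨k1, r, hr0, hr1, fun i => ?_⟩
    calc q (k1 + i) ≤ q k1 * r ^ i := R i
      _ ≤ 1 * r ^ i := mul_le_mul_of_nonneg_right (hq1 k1) (pow_nonneg hr0 i)
      _ = r ^ i := one_mul _
  · push_neg at hc
    exfalso
    have mono : ∀ i : ℕ, q k0 ≤ q (k0 + i) := by
      intro i
      induction i with
      | zero => simp
      | succ i ih =>
        have e3 : k0 + ((i : ℕ) + 1 : ℕ) = (k0 + i) + 1 := by push_cast; ring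
        rw [e3]
        exact le_trans ih (hc (k0 + i) (by omega))
    obtain ⟨N, hN⟩ := exists_nat_gt (1 / q k0)
    have hNq : 1 < (N : ℝ) * q k0 := by
      rw [div_lt_iff₀ hk0] at hN; linarith
    set F := (Finset.range N).image (fun i : ℕ => k0 + (i : ℤ)) with hF
    have hsF := hsum F
    have hsum2 : ∑ k ∈ F, q k = ∑ i ∈ Finset.range N, q (k0 + i) :=
      Finset.sum_image (by intro x _ y _ h; have h' : k0 + (x : ℤ) = k0 + (y : ℤ) := h; omega)
    have hcard : (N : ℝ) * q k0 ≤ ∑ i ∈ Finset.range N, q (k0 + i) := by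
      have := Finset.card_nsmul_le_sum (Finset.range N) (fun i => q (k0 + i)) (q k0)
        (fun i _ => mono i)
      simpa [nsmul_eq_mul] using this
    linarith [hsum2 ▸ hsF]

lemma tail_exists_left (q : ℤ → ℝ) (hnn : ∀ k, 0 ≤ q k) (hq1 : ∀ k, q k ≤ 1)
    (hint : ∀ a b c : ℤ, a ≤ b → b ≤ c → 0 < q a → 0 < q c → 0 < q b)
    (hlcq : ∀ k, q (k - 1) * q (k + 1) ≤ q k ^ 2)
    (hsum : ∀ F : Finset ℤ, ∑ k ∈ F, q k ≤ 1)
    (k0 : ℤ) (hk0 : 0 < q k0) :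
    ∃ (k2 : ℤ) (s : ℝ), 0 ≤ s ∧ s < 1 ∧ ∀ i : ℕ, q (k2 - i) ≤ s ^ i := by
  set q' : ℤ → ℝ := fun k => q (-k) with hq'
  have h := tail_exists_right q' (fun k => hnn _) (fun k => hq1 _)
    (fun a b c hab hbc ha hc => hint (-c) (-b) (-a) (by omega) (by omega) hc ha)
    (fun k => by
      have := hlcq (-k)
      simp only [hq']
      have e1 : -(k - 1) = -k + 1 := by ring
      have e2 : -(k + 1) = -k - 1 := by ring
      rw [e1, e2]
      calc q (-k + 1) * q (-k - 1) = q (-k - 1) * q (-k + 1) := mul_comm _ _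
        _ ≤ q (-k) ^ 2 := this)
    (fun F => by
      have : ∑ k ∈ F, q' k = ∑ k ∈ F.image (fun k => -k), q k := by
        rw [Finset.sum_image (by intro x _ y _ h; have h' : -x = -y := h; omega)]
      rw [this]; exact hsum _)
    (-k0) (by simpa [hq'] using hk0)
  obtain ⟨k1, r, hr0, hr1, hbd⟩ := h
  refine ⟨-k1, r, hr0, hr1, fun i => ?_⟩
  have h2 := hbd i
  have e : -(k1 + (i : ℤ)) = -k1 - i := by ring
  simpa [hq', e] using h2



lemma summable_nat_helper (f : ℕ → ℝ) (hnn : ∀ n, 0 ≤ f n) (r c : ℝ)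
    (h0r : 0 ≤ r) (hr1 : r < 1) (N : ℕ)
    (hb : ∀ n : ℕ, f (n + N) ≤ ((n : ℝ) + c) ^ 2 * r ^ n) : Summable f := by
  rw [← summable_nat_add_iff N]
  apply Summable.of_nonneg_of_le (fun n => hnn _) hb
  have he : (fun n : ℕ => ((n : ℝ) + c) ^ 2 * r ^ n)
      = fun n : ℕ => ((n : ℝ) ^ 2 * r ^ n) + (2 * c) * ((n : ℝ) ^ 1 * r ^ n)
        + c ^ 2 * r ^ n := by
    funext n; ring
  rw [he]
  have hrn : ‖r‖ < 1 := by rw [Real.norm_eq_abs, abs_of_nonneg h0r]; exact hr1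
  exact ((summable_pow_mul_geometric_of_norm_lt_one 2 hrn).add
    (((summable_pow_mul_geometric_of_norm_lt_one 1 hrn).mul_left (2 * c)))).add
    ((summable_geometric_of_norm_lt_one hrn).mul_left (c ^ 2))

lemma summable_sq_weight (q : ℤ → ℝ) (hnn : ∀ k, 0 ≤ q k) (m : ℝ)
    (k1 : ℤ) (r : ℝ) (hr0 : 0 ≤ r) (hr1 : r < 1) (hR : ∀ i : ℕ, q (k1 + i) ≤ r ^ i)
    (k2 : ℤ) (s : ℝ) (hs0 : 0 ≤ s) (hs1 : s < 1) (hL : ∀ i : ℕ, q (k2 - i) ≤ s ^ i) :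
    Summable (fun k : ℤ => ((k : ℝ) - m) ^ 2 * q k) := by
  have hRall : ∀ j : ℤ, k1 ≤ j → q j ≤ r ^ (j - k1).toNat := by
    intro j hj
    have e : k1 + (((j - k1).toNat : ℕ) : ℤ) = j := by omega
    calc q j = q (k1 + (((j - k1).toNat : ℕ) : ℤ)) := by rw [e]
      _ ≤ r ^ (j - k1).toNat := hR _
  have hLall : ∀ j : ℤ, j ≤ k2 → q j ≤ s ^ (k2 - j).toNat := by
    intro j hj
    have e : k2 - (((k2 - j).toNat : ℕ) : ℤ) = j := by omega
    calc q j = q (k2 - (((k2 - j).toNat : ℕ) : ℤ)) := by rw [e]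
      _ ≤ s ^ (k2 - j).toNat := hL _
  apply Summable.of_nat_of_neg
  · -- positive side
    set N := k1.toNat with hNdef
    apply summable_nat_helper _ (fun n => mul_nonneg (sq_nonneg _) (hnn _)) r
      ((N : ℝ) - m) hr0 hr1 N
    intro n
    have hge : k1 ≤ ((n + N : ℕ) : ℤ) := by omega
    have hq : q ((n + N : ℕ) : ℤ) ≤ r ^ n := by
      calc q ((n + N : ℕ) : ℤ) ≤ r ^ (((n + N : ℕ) : ℤ) - k1).toNat := hRall _ hge
        _ ≤ r ^ n := pow_le_pow_of_le_one hr0 hr1.le (by omega)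
    calc ((((n + N : ℕ) : ℤ) : ℝ) - m) ^ 2 * q ((n + N : ℕ) : ℤ)
        ≤ ((((n + N : ℕ) : ℤ) : ℝ) - m) ^ 2 * r ^ n :=
          mul_le_mul_of_nonneg_left hq (sq_nonneg _)
      _ = ((n : ℝ) + ((N : ℝ) - m)) ^ 2 * r ^ n := by push_cast; ring_nf
  · -- negative side
    set N := (-k2).toNat with hNdef
    apply summable_nat_helper _ (fun n => mul_nonneg (sq_nonneg _) (hnn _)) s
      ((N : ℝ) + m) hs0 hs1 N
    intro n
    have hle : (-((n + N : ℕ) : ℤ)) ≤ k2 := by omega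
    have hq : q (-((n + N : ℕ) : ℤ)) ≤ s ^ n := by
      calc q (-((n + N : ℕ) : ℤ)) ≤ s ^ (k2 - (-((n + N : ℕ) : ℤ))).toNat := hLall _ hle
        _ ≤ s ^ n := pow_le_pow_of_le_one hs0 hs1.le (by omega)
    show ((((-((n + N : ℕ) : ℤ)) : ℤ) : ℝ) - m) ^ 2 * q (-((n + N : ℕ) : ℤ))
        ≤ ((n : ℝ) + ((N : ℝ) + m)) ^ 2 * s ^ n
    calc ((((-((n + N : ℕ) : ℤ)) : ℤ) : ℝ) - m) ^ 2 * q (-((n + N : ℕ) : ℤ))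
        ≤ ((((-((n + N : ℕ) : ℤ)) : ℤ) : ℝ) - m) ^ 2 * s ^ n :=
          mul_le_mul_of_nonneg_left hq (sq_nonneg _)
      _ = ((n : ℝ) + ((N : ℝ) + m)) ^ 2 * s ^ n := by push_cast; ring_nf



lemma telescope_hasSum {g : ℕ → ℝ} (hmono : ∀ n, g (n + 1) ≤ g n)
    (hlim : Tendsto g atTop (nhds 0)) :
    HasSum (fun n => g n - g (n + 1)) (g 0) := by
  rw [hasSum_iff_tendsto_nat_of_nonneg (fun i => sub_nonneg.2 (hmono i))]
  have he : ∀ n, ∑ i ∈ Finset.range n, (g i - g (i + 1)) = g 0 - g n :=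
    fun n => Finset.sum_range_sub' g n
  simp_rw [he]
  simpa using tendsto_const_nhds.sub hlim

lemma sqrt_inv_tendsto (b : ℝ) :
    Tendsto (fun n : ℕ => 1 / Real.sqrt ((n : ℝ) + b)) atTop (nhds 0) := by
  simp_rw [one_div]
  apply Filter.Tendsto.inv_tendsto_atTop
  apply tendsto_atTop_atTop.2
  intro C
  refine ⟨⌈C ^ 2 + |b|⌉₊, fun n hn => ?_⟩
  rcases le_or_gt C 0 with hC | hC
  · exact hC.trans (Real.sqrt_nonneg _)
  · have h1 : C ^ 2 + |b| ≤ (n : ℝ) := le_trans (Nat.le_ceil _) (by exact_mod_cast hn)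
    have h2 : -|b| ≤ b := neg_abs_le b
    exact Real.le_sqrt_of_sq_le (by linarith)

lemma telescope_sqrt (b : ℝ) (hb : 1 ≤ b) :
    HasSum (fun n : ℕ => 1 / Real.sqrt ((n : ℝ) + b) - 1 / Real.sqrt ((n : ℝ) + b + 1))
      (1 / Real.sqrt b) := by
  have h := telescope_hasSum (g := fun n : ℕ => 1 / Real.sqrt ((n : ℝ) + b))
    (fun n => by
      apply one_div_le_one_div_of_le
      · apply Real.sqrt_pos.2; positivity
      · apply Real.sqrt_le_sqrt; push_cast; linarith)
    (sqrt_inv_tendsto b)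
  have hcast : ∀ n : ℕ, ((n + 1 : ℕ) : ℝ) + b = (n : ℝ) + b + 1 := by
    intro n; push_cast; ring
  simp_rw [hcast] at h
  simpa using h

noncomputable def Bfun : ℤ → ℝ := fun j =>
  if 4 ≤ j then
    128 * Real.exp (-2) * (1 / Real.sqrt ((j : ℝ) - 2) - 1 / Real.sqrt ((j : ℝ) - 1))
  else if j ≤ -4 then
    128 * Real.exp (-2) * (1 / Real.sqrt (-(j : ℝ) - 1) - 1 / Real.sqrt (-(j : ℝ)))
  else 4 * Real.exp (-2)

lemma hasSum_Bfun :
    HasSum Bfun ((128 * Real.exp (-2) * (1 / Real.sqrt 2) + 16 * Real.exp (-2))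
      + (128 * Real.exp (-2) * (1 / Real.sqrt 3) + 12 * Real.exp (-2))) := by
  have hpos : HasSum (fun n : ℕ => Bfun n)
      (128 * Real.exp (-2) * (1 / Real.sqrt 2) + 16 * Real.exp (-2)) := by
    have h1 : HasSum (fun n : ℕ => Bfun ((n : ℤ) + 4))
        (128 * Real.exp (-2) * (1 / Real.sqrt 2)) := by
      have h2 := (telescope_sqrt 2 one_le_two).mul_left (128 * Real.exp (-2))
      have he : (fun n : ℕ => Bfun ((n : ℤ) + 4))
          = fun n : ℕ => 128 * Real.exp (-2) *
            (1 / Real.sqrt ((n : ℝ) + 2) - 1 / Real.sqrt ((n : ℝ) + 2 + 1)) := by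
        funext n
        have h4 : (4 : ℤ) ≤ (n : ℤ) + 4 := by omega
        rw [Bfun, if_pos h4]
        have e1 : (((n : ℤ) + 4 : ℤ) : ℝ) - 2 = (n : ℝ) + 2 := by push_cast; ring
        have e2 : (((n : ℤ) + 4 : ℤ) : ℝ) - 1 = (n : ℝ) + 2 + 1 := by push_cast; ring
        rw [e1, e2]
      rw [he]
      exact h2
    have h1' : HasSum (fun n : ℕ => (fun i : ℕ => Bfun i) (n + 4))
        (128 * Real.exp (-2) * (1 / Real.sqrt 2)) := by
      have : (fun n : ℕ => (fun i : ℕ => Bfun i) (n + 4))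
          = fun n : ℕ => Bfun ((n : ℤ) + 4) := by
        funext n; norm_num
      rw [this]; exact h1
    have h3 := (hasSum_nat_add_iff (f := fun i : ℕ => Bfun i) 4).1 h1'
    have hsum4 : ∑ i ∈ Finset.range 4, Bfun (i : ℤ) = 16 * Real.exp (-2) := by
      rw [Finset.sum_range_succ, Finset.sum_range_succ, Finset.sum_range_succ,
        Finset.sum_range_succ, Finset.sum_range_zero]
      norm_num [Bfun]
      ring
    rw [hsum4] at h3
    exact h3
  have hneg : HasSum (fun n : ℕ => Bfun (-((n : ℤ) + 1)))
      (128 * Real.exp (-2) * (1 / Real.sqrt 3) + 12 * Real.exp (-2)) := by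
    have h1 : HasSum (fun n : ℕ => Bfun (-((n : ℤ) + 4)))
        (128 * Real.exp (-2) * (1 / Real.sqrt 3)) := by
      have h2 := (telescope_sqrt 3 (by norm_num)).mul_left (128 * Real.exp (-2))
      have he : (fun n : ℕ => Bfun (-((n : ℤ) + 4)))
          = fun n : ℕ => 128 * Real.exp (-2) *
            (1 / Real.sqrt ((n : ℝ) + 3) - 1 / Real.sqrt ((n : ℝ) + 3 + 1)) := by
        funext n
        have h4 : ¬ (4 : ℤ) ≤ -((n : ℤ) + 4) := by omega
        have h5 : (-((n : ℤ) + 4)) ≤ -4 := by omega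
        rw [Bfun]
        simp only [if_neg h4, if_pos h5]
        have e1 : -((-((n : ℤ) + 4) : ℤ) : ℝ) - 1 = (n : ℝ) + 3 := by push_cast; ring
        have e2 : -((-((n : ℤ) + 4) : ℤ) : ℝ) = (n : ℝ) + 3 + 1 := by push_cast; ring
        rw [e1, e2]
      rw [he]
      exact h2
    have h1' : HasSum (fun n : ℕ => (fun i : ℕ => Bfun (-((i : ℤ) + 1))) (n + 3))
        (128 * Real.exp (-2) * (1 / Real.sqrt 3)) := by
      have : (fun n : ℕ => (fun i : ℕ => Bfun (-((i : ℤ) + 1))) (n + 3))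
          = fun n : ℕ => Bfun (-((n : ℤ) + 4)) := by
        funext n
        show Bfun (-(((n + 3 : ℕ) : ℤ) + 1)) = Bfun (-((n : ℤ) + 4))
        have e9 : (-(((n + 3 : ℕ) : ℤ) + 1)) = -((n : ℤ) + 4) := by omega
        rw [e9]
      rw [this]; exact h1
    have h3 := (hasSum_nat_add_iff (f := fun i : ℕ => Bfun (-((i : ℤ) + 1))) 3).1 h1'
    have hsum3 : ∑ i ∈ Finset.range 3, Bfun (-((i : ℤ) + 1)) = 12 * Real.exp (-2) := by
      rw [Finset.sum_range_succ, Finset.sum_range_succ, Finset.sum_range_succ,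
        Finset.sum_range_zero]
      norm_num [Bfun]
      ring
    rw [hsum3] at h3
    exact h3
  exact HasSum.of_nat_of_neg_add_one hpos hneg

lemma Bsum_le :
    (128 * Real.exp (-2) * (1 / Real.sqrt 2) + 16 * Real.exp (-2))
      + (128 * Real.exp (-2) * (1 / Real.sqrt 3) + 12 * Real.exp (-2)) ≤ 39 := by
  have hE : Real.exp (-2) ≤ 1 / 7.3 := by
    have h1 : Real.exp 2 = Real.exp 1 * Real.exp 1 := by rw [← Real.exp_add]; norm_num
    have h2 : (7.3 : ℝ) ≤ Real.exp 2 := by nlinarith [Real.exp_one_gt_d9]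
    rw [Real.exp_neg, inv_eq_one_div, div_le_div_iff₀ (Real.exp_pos 2) (by norm_num)]
    linarith
  have hs2 : (1.4 : ℝ) ≤ Real.sqrt 2 := Real.le_sqrt_of_sq_le (by norm_num)
  have hs3 : (1.7 : ℝ) ≤ Real.sqrt 3 := Real.le_sqrt_of_sq_le (by norm_num)
  have h2' : 1 / Real.sqrt 2 ≤ 1 / 1.4 := one_div_le_one_div_of_le (by norm_num) hs2
  have h3' : 1 / Real.sqrt 3 ≤ 1 / 1.7 := one_div_le_one_div_of_le (by norm_num) hs3
  have t1 : Real.exp (-2) * (1 / Real.sqrt 2) ≤ (1 / 7.3) * (1 / 1.4) :=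
    mul_le_mul hE h2' (by positivity) (by norm_num)
  have t2 : Real.exp (-2) * (1 / Real.sqrt 3) ≤ (1 / 7.3) * (1 / 1.7) :=
    mul_le_mul hE h3' (by positivity) (by norm_num)
  nlinarith [t1, t2, hE]


open MeasureTheory ProbabilityTheory
open scoped ProbabilityTheory

/-- If `X` is a log-concave integer-valued random variable with p.m.f. `p` and
`Var(X) ≤ 1`, then `E[log²(p(X))] ≤ 39`. -/
theorem second_moment_information_content_isotropic
    {Ω : Type*} [MeasureSpace Ω] [IsProbabilityMeasure (ℙ : Measure Ω)]
    (X : Ω → ℤ) (hX : Measurable X)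
    (p : ℤ → ℝ) (hp : ∀ k : ℤ, p k = (ℙ (X ⁻¹' {k})).toReal)
    (hlc : IsLogConcavePMF p)
    (m : ℝ) (hm : m = ∫ ω, (X ω : ℝ))
    (hvar : (∫ ω, ((X ω : ℝ) - m) ^ 2) ≤ 1) :
    (∫ ω, (Real.log (p (X ω))) ^ 2) ≤ 39 := by
  have hpnn : ∀ k, 0 ≤ p k := fun k => (hp k) ▸ ENNReal.toReal_nonneg
  have hp1 : ∀ k, p k ≤ 1 := by
    intro k
    rw [hp k]
    exact ENNReal.toReal_le_of_le_ofReal zero_le_one (by simpa using prob_le_one)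
  have hofReal : ∀ k, ENNReal.ofReal (p k) = ℙ (X ⁻¹' {k}) := by
    intro k
    rw [hp k, ENNReal.ofReal_toReal (measure_ne_top _ _)]
  -- lintegral of a nonneg function of X as a tsum
  have key : ∀ g : ℤ → ℝ, (∀ k, 0 ≤ g k) →
      ∫⁻ ω, ENNReal.ofReal (g (X ω)) = ∑' k : ℤ, ENNReal.ofReal (g k * p k) := by
    intro g hg
    have hgm : Measurable (fun k : ℤ => ENNReal.ofReal (g k)) := Measurable.of_discrete
    calc ∫⁻ ω, ENNReal.ofReal (g (X ω))
        = ∫⁻ k, ENNReal.ofReal (g k) ∂(Measure.map X ℙ) := (lintegral_map hgm hX).symm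
      _ = ∑' k : ℤ, ENNReal.ofReal (g k) * (Measure.map X ℙ) {k} := lintegral_countable' _
      _ = ∑' k : ℤ, ENNReal.ofReal (g k * p k) := by
          apply tsum_congr; intro k
          rw [Measure.map_apply hX (measurableSet_singleton k), ← hofReal k,
            ← ENNReal.ofReal_mul (hg k)]
  -- finite sums of p are at most 1
  have hfin : ∀ F : Finset ℤ, ∑ k ∈ F, p k ≤ 1 := by
    intro F
    have hdisj : (↑F : Set ℤ).PairwiseDisjoint (fun k => X ⁻¹' {k}) := by
      intro a _ b _ hab
      apply Set.disjoint_left.2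
      intro ω ha hb
      exact hab (by rw [← ha, ← hb])
    have hU := measure_biUnion_finset (μ := ℙ) hdisj (fun b _ => hX (measurableSet_singleton b))
    calc ∑ k ∈ F, p k = ∑ k ∈ F, (ℙ (X ⁻¹' {k})).toReal :=
          Finset.sum_congr rfl (fun k _ => hp k)
      _ = (∑ k ∈ F, ℙ (X ⁻¹' {k})).toReal :=
          (ENNReal.toReal_sum (fun k _ => measure_ne_top _ _)).symm
      _ = (ℙ (⋃ k ∈ F, X ⁻¹' {k})).toReal := by rw [hU]
      _ ≤ 1 := ENNReal.toReal_le_of_le_ofReal zero_le_one (by simpa using prob_le_one)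
  -- some point has positive mass
  have hex : ∃ k0, 0 < p k0 := by
    by_contra hall
    push_neg at hall
    have hzero : ∀ k : ℤ, ℙ (X ⁻¹' {k}) = 0 := by
      intro k
      have h0 : (ℙ (X ⁻¹' {k})).toReal = 0 :=
        le_antisymm ((hp k) ▸ hall k) ENNReal.toReal_nonneg
      rcases (ENNReal.toReal_eq_zero_iff _).1 h0 with h | h
      · exact h
      · exact absurd h (measure_ne_top _ _)
    have huniv : (Set.univ : Set Ω) = ⋃ k : ℤ, X ⁻¹' {k} := by
      ext ω; simp
    have h2 : ℙ (⋃ k : ℤ, X ⁻¹' {k}) = 0 := measure_iUnion_null hzero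
    rw [← huniv, measure_univ] at h2
    exact one_ne_zero h2
  obtain ⟨k0, hk0⟩ := hex
  obtain ⟨k1, r, hr0, hr1, hR⟩ :=
    tail_exists_right p hpnn hp1 hlc.2 hlc.1 hfin k0 hk0
  obtain ⟨k2, s, hs0, hs1, hL⟩ :=
    tail_exists_left p hpnn hp1 hlc.2 hlc.1 hfin k0 hk0
  have hsumm : Summable (fun k : ℤ => ((k : ℝ) - m) ^ 2 * p k) :=
    summable_sq_weight p hpnn m k1 r hr0 hr1 hR k2 s hs0 hs1 hL
  set V := ∑' k : ℤ, ENNReal.ofReal (((k : ℝ) - m) ^ 2 * p k) with hVdef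
  have hVeq : ∫⁻ ω, ENNReal.ofReal (((X ω : ℝ) - m) ^ 2) = V :=
    key (fun k => ((k : ℝ) - m) ^ 2) (fun k => sq_nonneg _)
  have hVof : V = ENNReal.ofReal (∑' k : ℤ, ((k : ℝ) - m) ^ 2 * p k) :=
    (ENNReal.ofReal_tsum_of_nonneg (fun k => mul_nonneg (sq_nonneg _) (hpnn k)) hsumm).symm
  have hVne : V ≠ ⊤ := by rw [hVof]; exact ENNReal.ofReal_ne_top
  have hInt : ∫ ω, ((X ω : ℝ) - m) ^ 2 = V.toReal := by
    rw [integral_eq_lintegral_of_nonneg_ae (Filter.Eventually.of_forall fun ω => sq_nonneg _)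
      ((Measurable.of_discrete (f := fun k : ℤ => ((k : ℝ) - m) ^ 2)).comp
        hX).aestronglyMeasurable]
    rw [hVeq]
  have hV1 : V ≤ ENNReal.ofReal 1 := by
    have h1 : V.toReal ≤ 1 := by rw [← hInt]; exact hvar
    exact (ENNReal.le_ofReal_iff_toReal_le hVne zero_le_one).2 h1
  have cheb : ∀ k : ℤ, ((k : ℝ) - m) ^ 2 * p k ≤ 1 := by
    intro k
    have h1 : ENNReal.ofReal (((k : ℝ) - m) ^ 2 * p k) ≤ V := ENNReal.le_tsum k
    exact (ENNReal.ofReal_le_ofReal_iff zero_le_one).1 (h1.trans hV1)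
  set n : ℤ := ⌊m⌋ with hn
  have hfl : (n : ℝ) ≤ m := Int.floor_le m
  have hfl2 : m < (n : ℝ) + 1 := Int.lt_floor_add_one m
  -- pointwise bound by Bfun
  have hpt : ∀ j : ℤ, Real.log (p (n + j)) ^ 2 * p (n + j) ≤ Bfun j := by
    intro j
    by_cases h4 : 4 ≤ j
    · rw [Bfun, if_pos h4]
      have hj4 : (4 : ℝ) ≤ (j : ℝ) := by exact_mod_cast h4
      have ha3 : (3 : ℝ) ≤ (j : ℝ) - 1 := by linarith
      have hbig : (j : ℝ) - 1 ≤ ((n + j : ℤ) : ℝ) - m := by push_cast; linarith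
      have hb2 : ((j : ℝ) - 1) ^ 2 * p (n + j) ≤ 1 :=
        le_trans (mul_le_mul_of_nonneg_right
          (pow_le_pow_left₀ (by linarith) hbig 2) (hpnn _)) (cheb (n + j))
      have hple : p (n + j) ≤ 1 / ((j : ℝ) - 1) ^ 2 := by
        rw [le_div_iff₀ (by positivity)]
        nlinarith [hb2]
      have hres := tail_bound ha3 (hpnn (n + j)) hple
      rw [show ((j : ℝ) - 2) = ((j : ℝ) - 1) - 1 by ring]
      exact hres
    · by_cases h4' : j ≤ -4
      · rw [Bfun, if_neg h4, if_pos h4']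
        have hj4 : (j : ℝ) ≤ -4 := by exact_mod_cast h4'
        have ha3 : (3 : ℝ) ≤ -(j : ℝ) := by linarith
        have hbig : -(j : ℝ) ≤ m - ((n + j : ℤ) : ℝ) := by push_cast; linarith
        have hb2 : (-(j : ℝ)) ^ 2 * p (n + j) ≤ 1 := by
          have h5 : (-(j : ℝ)) ^ 2 ≤ (m - ((n + j : ℤ) : ℝ)) ^ 2 :=
            pow_le_pow_left₀ (by linarith) hbig 2
          have h6 : (m - ((n + j : ℤ) : ℝ)) ^ 2 = (((n + j : ℤ) : ℝ) - m) ^ 2 := by ring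
          nlinarith [cheb (n + j), hpnn (n + j)]
        have hple : p (n + j) ≤ 1 / (-(j : ℝ)) ^ 2 := by
          rw [le_div_iff₀ (by positivity)]
          nlinarith [hb2]
        exact tail_bound ha3 (hpnn (n + j)) hple
      · rw [Bfun, if_neg h4, if_neg h4']
        exact term_le_global (hpnn _) (hp1 _)
  have hBnn : ∀ j : ℤ, 0 ≤ Bfun j := by
    intro j
    rw [Bfun]
    split_ifs with h1 h2
    · have hj4 : (4 : ℝ) ≤ (j : ℝ) := by exact_mod_cast h1
      apply mul_nonneg (by positivity)
      apply sub_nonneg.2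
      apply one_div_le_one_div_of_le
      · apply Real.sqrt_pos.2; linarith
      · apply Real.sqrt_le_sqrt; linarith
    · have hj4 : (j : ℝ) ≤ -4 := by exact_mod_cast h2
      apply mul_nonneg (by positivity)
      apply sub_nonneg.2
      apply one_div_le_one_div_of_le
      · apply Real.sqrt_pos.2; linarith
      · apply Real.sqrt_le_sqrt; linarith
    · positivity
  -- final chain
  rw [integral_eq_lintegral_of_nonneg_ae (Filter.Eventually.of_forall fun ω => sq_nonneg _)
    ((Measurable.of_discrete (f := fun k : ℤ => Real.log (p k) ^ 2)).comp
      hX).aestronglyMeasurable]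
  have hkey2 : ∫⁻ ω, ENNReal.ofReal (Real.log (p (X ω)) ^ 2)
      = ∑' k : ℤ, ENNReal.ofReal (Real.log (p k) ^ 2 * p k) :=
    key (fun k => Real.log (p k) ^ 2) (fun k => sq_nonneg _)
  rw [hkey2]
  have hle : ∑' k : ℤ, ENNReal.ofReal (Real.log (p k) ^ 2 * p k) ≤ ENNReal.ofReal 39 := by
    have e1 : ∑' k : ℤ, ENNReal.ofReal (Real.log (p k) ^ 2 * p k)
        = ∑' j : ℤ, ENNReal.ofReal (Real.log (p (n + j)) ^ 2 * p (n + j)) :=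
      ((Equiv.addLeft n).tsum_eq
        (fun k => ENNReal.ofReal (Real.log (p k) ^ 2 * p k))).symm
    rw [e1]
    calc ∑' j : ℤ, ENNReal.ofReal (Real.log (p (n + j)) ^ 2 * p (n + j))
        ≤ ∑' j : ℤ, ENNReal.ofReal (Bfun j) :=
          ENNReal.tsum_le_tsum (fun j => ENNReal.ofReal_le_ofReal (hpt j))
      _ = ENNReal.ofReal (∑' j : ℤ, Bfun j) :=
          (ENNReal.ofReal_tsum_of_nonneg hBnn hasSum_Bfun.summable).symm
      _ ≤ ENNReal.ofReal 39 :=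
          ENNReal.ofReal_le_ofReal (by rw [hasSum_Bfun.tsum_eq]; exact Bsum_le)
  exact ENNReal.toReal_le_of_le_ofReal (by norm_num) hle
end
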